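/- arXiv:1112.0906 — 9 statements merged into one kernel-verified Lean document; each statement's English description precedes it below -/
import Mathlib

section
/- (Generalized Bayes formula) Let X be F-valued and ε be G-valued independent random variables, L : F → G Borel measurable, and Y = L(X) + ε. Suppose the law μ_{ε+L(x)} of ε + L(x) is absolutely continuous with respect to a σ-finite measure ν on G for μ_X-almost every x, with density ρ(x,z) jointly (μ_X × ν)-measurable. Then the set N₀ = { z ∈ G : ∫_F ρ(x,z) dμ_X(x) = 0 or = ∞ } has μ_Y-measure zero, and the map μ(U,z) = (∫_U ρ(x,z) dμ_X(x)) / (∫_F ρ(x,z) dμ_X(x)), defined for z ∉ N₀, gives a regular conditional distribution of X given Y: for every Borel U ⊆ F, μ(U, Y(ω)) = E[1_U(X) | σ(Y)](ω) P-almost surely. -/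
open MeasureTheory ProbabilityTheory
open scoped ENNReal

/-- Generalized Bayes formula: with `X : Ω → F`, `ε : Ω → G` independent, `L` Borel measurable,
`Y = L(X) + ε`, and `μ_{ε+L(x)} = ν.withDensity (ρ x)` for μ_X-a.e. `x` with jointly measurable
`ρ`, the set `N₀ = {z | ∫ ρ(x,z) dμ_X(x) = 0 or ∞}` is μ_Y-null, and for every Borel `U ⊆ F`,
`μ(U, Y ω) = (∫_U ρ(x, Y ω) dμ_X)/(∫_F ρ(x, Y ω) dμ_X)` is P-a.s. a version of the conditional
expectation `E[1_U(X) | σ(Y)]`. -/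
theorem stmt4 {Ω F G : Type*} [mΩ : MeasurableSpace Ω]
    [MeasurableSpace F] [StandardBorelSpace F]
    [MeasurableSpace G] [StandardBorelSpace G] [AddCommGroup G] [MeasurableAdd₂ G]
    (P : Measure Ω) [IsProbabilityMeasure P] (hP : P.IsComplete)
    (X : Ω → F) (ε : Ω → G) (hX : Measurable X) (hε : Measurable ε)
    (hind : IndepFun X ε P)
    (L : F → G) (hL : Measurable L)
    (Y : Ω → G) (hY : Y = fun ω => L (X ω) + ε ω)
    (ν : Measure G) [SigmaFinite ν]
    (ρ : F → G → ℝ≥0∞) (hρ : Measurable (Function.uncurry ρ))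
    (hdens : ∀ᵐ x ∂(P.map X), P.map (fun ω => ε ω + L x) = ν.withDensity (ρ x)) :
    P.map Y {z | ∫⁻ x, ρ x z ∂(P.map X) = 0 ∨ ∫⁻ x, ρ x z ∂(P.map X) = ∞} = 0 ∧
      ∀ U : Set F, MeasurableSet U →
        (fun ω => ((∫⁻ x in U, ρ x (Y ω) ∂(P.map X)) /
            (∫⁻ x, ρ x (Y ω) ∂(P.map X))).toReal)
          =ᵐ[P]
          P[fun ω => Set.indicator U (fun _ => (1 : ℝ)) (X ω)|
            MeasurableSpace.comap Y inferInstance] := by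
  have hYm : Measurable Y := by
    rw [hY]; exact (hL.comp hX).add hε
  have hμXprob : IsProbabilityMeasure (P.map X) := Measure.isProbabilityMeasure_map hX.aemeasurable
  have hμYprob : IsProbabilityMeasure (P.map Y) := Measure.isProbabilityMeasure_map hYm.aemeasurable
  set μX := P.map X with hμX
  set με := P.map ε with hμε
  set f : G → ℝ≥0∞ := fun z => ∫⁻ x, ρ x z ∂μX with hfdef
  have hfm : Measurable f := hρ.lintegral_prod_left'
  -- the key joint-law computation
  have key : ∀ U S : Set _, MeasurableSet U → MeasurableSet S →
      P (X ⁻¹' U ∩ Y ⁻¹' S) = ∫⁻ z in S, ∫⁻ x in U, ρ x z ∂μX ∂ν := by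
    intro U S hU hS
    have hmap : P.map (fun ω => (X ω, ε ω)) = μX.prod με :=
      (indepFun_iff_map_prod_eq_prod_map_map hX.aemeasurable hε.aemeasurable).mp hind
    have hTset : MeasurableSet {p : F × G | p.1 ∈ U ∧ L p.1 + p.2 ∈ S} := by
      have h1 : {p : F × G | p.1 ∈ U ∧ L p.1 + p.2 ∈ S}
          = (Prod.fst ⁻¹' U) ∩ ((fun p : F × G => L p.1 + p.2) ⁻¹' S) := rfl
      rw [h1]
      exact (measurable_fst hU).inter (((hL.comp measurable_fst).add measurable_snd) hS)
    have h1 : X ⁻¹' U ∩ Y ⁻¹' S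
        = (fun ω => (X ω, ε ω)) ⁻¹' {p : F × G | p.1 ∈ U ∧ L p.1 + p.2 ∈ S} := by
      rw [hY]; rfl
    rw [h1, ← Measure.map_apply (hX.prodMk hε) hTset, hmap, Measure.prod_apply hTset]
    have h2 : ∀ x, με (Prod.mk x ⁻¹' {p : F × G | p.1 ∈ U ∧ L p.1 + p.2 ∈ S})
        = Set.indicator U (fun x => με ((fun e => L x + e) ⁻¹' S)) x := by
      intro x
      by_cases hx : x ∈ U
      · have : Prod.mk x ⁻¹' {p : F × G | p.1 ∈ U ∧ L p.1 + p.2 ∈ S}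
            = (fun e => L x + e) ⁻¹' S := by
          ext e; simp [hx]
        rw [this, Set.indicator_of_mem hx]
      · have : Prod.mk x ⁻¹' {p : F × G | p.1 ∈ U ∧ L p.1 + p.2 ∈ S} = (∅ : Set G) := by
          ext e; simp [hx]
        rw [this, Set.indicator_of_notMem hx, measure_empty]
    rw [lintegral_congr h2, lintegral_indicator hU]
    have hae : ∀ᵐ x ∂μX, με ((fun e => L x + e) ⁻¹' S) = ∫⁻ z in S, ρ x z ∂ν := by
      filter_upwards [hdens] with x hx
      have hset : (fun e => L x + e) ⁻¹' S = (fun e => e + L x) ⁻¹' S := by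
        ext e; simp [add_comm]
      have hcomp : ε ⁻¹' ((fun e => e + L x) ⁻¹' S) = (fun ω => ε ω + L x) ⁻¹' S := rfl
      rw [hset, hμε, Measure.map_apply hε ((measurable_add_const (L x)) hS), hcomp,
        ← Measure.map_apply (hε.add_const (L x)) hS, hx, withDensity_apply _ hS]
    calc ∫⁻ x in U, με ((fun e => L x + e) ⁻¹' S) ∂μX
        = ∫⁻ x in U, ∫⁻ z in S, ρ x z ∂ν ∂μX :=
          lintegral_congr_ae (ae_restrict_of_ae hae)
      _ = ∫⁻ z in S, ∫⁻ x in U, ρ x z ∂μX ∂ν := by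
          exact lintegral_lintegral_swap (hρ.aemeasurable)
  -- the law of Y
  have hmapY : P.map Y = ν.withDensity f := by
    ext S hS
    rw [Measure.map_apply hYm hS, withDensity_apply _ hS]
    have h := key Set.univ S MeasurableSet.univ hS
    simpa [hfdef] using h
  have hs0 : MeasurableSet {z | f z = 0} := hfm (measurableSet_singleton 0)
  have hsi : MeasurableSet {z | f z = ∞} := hfm (measurableSet_singleton ∞)
  -- the ∞-set is ν-null
  have hnuTop : ν {z | f z = ∞} = 0 := by
    by_contra h
    have h1 : P.map Y {z | f z = ∞} = ∞ := by
      rw [hmapY, withDensity_apply _ hsi,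
        setLIntegral_congr_fun (g := fun _ => ∞) hsi (fun z hz => hz),
        setLIntegral_const, ENNReal.top_mul h]
    exact absurd h1 (measure_ne_top _ _)
  have haeTop : ∀ᵐ z ∂ν, f z ≠ ∞ := by
    rw [ae_iff]; simpa using hnuTop
  have hN0 : P.map Y {z | f z = 0 ∨ f z = ∞} = 0 := by
    have hsU : MeasurableSet {z | f z = 0 ∨ f z = ∞} := by
      have : {z | f z = 0 ∨ f z = ∞} = {z | f z = 0} ∪ {z | f z = ∞} := rfl
      rw [this]; exact hs0.union hsi
    rw [hmapY, withDensity_apply _ hsU]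
    have hz : ∀ᵐ z ∂(ν.restrict {z | f z = 0 ∨ f z = ∞}), f z = 0 := by
      rw [ae_restrict_iff' hsU]
      filter_upwards [haeTop] with z hz hzs
      rcases hzs with h0 | hi
      · exact h0
      · exact absurd hi hz
    rw [lintegral_congr_ae hz, lintegral_zero]
  refine ⟨hN0, ?_⟩
  -- second part: conditional expectation
  intro U hU
  set fU : G → ℝ≥0∞ := fun z => ∫⁻ x in U, ρ x z ∂μX with hfUdef
  have hfUm : Measurable fU := hρ.lintegral_prod_left'
  set g : G → ℝ := fun z => (fU z / f z).toReal with hgdef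
  have hgm : Measurable g := (hfUm.div hfm).ennreal_toReal
  have hle1 : ∀ z, fU z / f z ≤ 1 := fun z =>
    le_trans (ENNReal.div_le_div_right (setLIntegral_le_lintegral U fun x => ρ x z) _)
      ENNReal.div_self_le_one
  have hnetop : ∀ z, fU z / f z ≠ ∞ := fun z =>
    ((hle1 z).trans_lt ENNReal.one_lt_top).ne
  have hm : MeasurableSpace.comap Y inferInstance ≤ mΩ := hYm.comap_le
  have hfint : Integrable (fun ω => Set.indicator U (fun _ => (1 : ℝ)) (X ω)) P := by
    have heq : (fun ω => Set.indicator U (fun _ => (1 : ℝ)) (X ω))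
        = Set.indicator (X ⁻¹' U) (fun _ => (1 : ℝ)) := by
      funext ω; by_cases h : X ω ∈ U <;> simp [Set.indicator, h]
    rw [heq]
    exact (integrable_const (1 : ℝ)).indicator (hX hU)
  have hgYint : Integrable (fun ω => g (Y ω)) P := by
    refine ⟨((hgm.comp hYm)).aestronglyMeasurable, ?_⟩
    refine HasFiniteIntegral.of_bounded (C := 1) ?_
    filter_upwards with ω
    rw [Real.norm_eq_abs, abs_of_nonneg ENNReal.toReal_nonneg]
    have := ENNReal.toReal_mono ENNReal.one_ne_top (hle1 (Y ω))
    simpa using this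
  have hgsm : AEStronglyMeasurable[MeasurableSpace.comap Y inferInstance]
      (fun ω => g (Y ω)) P := by
    refine StronglyMeasurable.aestronglyMeasurable ?_
    have hYm' : @Measurable Ω G (MeasurableSpace.comap Y inferInstance) _ Y :=
      Measurable.of_comap_le le_rfl
    exact (hgm.comp hYm').stronglyMeasurable
  have hint : ∀ s, MeasurableSet[MeasurableSpace.comap Y inferInstance] s → P s < ∞ →
      IntegrableOn (fun ω => g (Y ω)) s P := fun s _ _ => hgYint.integrableOn
  refine (ae_eq_condExp_of_forall_setIntegral_eq hm hfint hint ?_ hgsm :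
    (fun ω => g (Y ω)) =ᵐ[P] _)
  intro s hs _
  obtain ⟨S, hS, rfl⟩ := hs
  -- RHS
  have hRHS : ∫ ω in Y ⁻¹' S, Set.indicator U (fun _ => (1 : ℝ)) (X ω) ∂P
      = (P (X ⁻¹' U ∩ Y ⁻¹' S)).toReal := by
    have heq : (fun ω => Set.indicator U (fun _ => (1 : ℝ)) (X ω))
        = Set.indicator (X ⁻¹' U) (fun _ => (1 : ℝ)) := by
      funext ω; by_cases h : X ω ∈ U <;> simp [Set.indicator, h]
    rw [heq, setIntegral_indicator (hX hU), setIntegral_const, smul_eq_mul, mul_one,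
      Set.inter_comm, measureReal_def]
  -- LHS
  have hLHS : ∫ ω in Y ⁻¹' S, g (Y ω) ∂P = (P (X ⁻¹' U ∩ Y ⁻¹' S)).toReal := by
    rw [← setIntegral_map hS hgm.aestronglyMeasurable hYm.aemeasurable, hmapY]
    have hpos : 0 ≤ᵐ[(ν.withDensity f).restrict S] g :=
      Filter.Eventually.of_forall fun z => ENNReal.toReal_nonneg
    rw [integral_eq_lintegral_of_nonneg_ae hpos
      (hgm.aestronglyMeasurable.restrict)]
    congr 1
    have hofReal : ∀ z, ENNReal.ofReal (g z) = fU z / f z := fun z =>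
      ENNReal.ofReal_toReal (hnetop z)
    rw [lintegral_congr hofReal, restrict_withDensity hS,
      lintegral_withDensity_eq_lintegral_mul _ hfm (g := fun z => fU z / f z) (hfUm.div hfm)]
    have haeeq : ∀ᵐ z ∂(ν.restrict S), (f * fun z => fU z / f z) z = fU z := by
      refine ae_restrict_of_ae ?_
      filter_upwards [haeTop] with z hz
      by_cases h0 : f z = 0
      · have hU0 : fU z = 0 := le_antisymm
          (h0 ▸ setLIntegral_le_lintegral U fun x => ρ x z) zero_le
        simp [h0, hU0]
      · simp only [Pi.mul_apply]
        rw [ENNReal.mul_div_cancel h0 hz]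
    rw [lintegral_congr_ae haeeq, ← key U S hU hS]
  rw [hLHS, hRHS]
end

section
/- In the setting of the generalized Bayes formula, if additionally μ_{ε+L(x)} ≪ ν for all x ∈ F and ρ > 0 holds (μ_X × ν)-almost everywhere, then every Borel set N ⊆ G with μ_Y(N) = 0 satisfies μ_{ε+L(x₀)}(N) = 0 for every x₀ ∈ F. -/
open MeasureTheory ProbabilityTheory
open scoped ENNReal

/-- In the setting of the generalized Bayes formula, if moreover `μ_{ε+L(x)} ≪ ν` for all
`x ∈ F` and the density `ρ` is positive `(μ_X × ν)`-a.e., then every Borel set `N ⊆ G` with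
`μ_Y(N) = 0` satisfies `μ_{ε+L(x₀)}(N) = 0` for every `x₀ ∈ F`. -/
theorem stmt5 {Ω F G : Type*} [mΩ : MeasurableSpace Ω]
    [MeasurableSpace F] [StandardBorelSpace F]
    [MeasurableSpace G] [StandardBorelSpace G] [AddCommGroup G] [MeasurableAdd₂ G]
    (P : Measure Ω) [IsProbabilityMeasure P] (hP : P.IsComplete)
    (X : Ω → F) (ε : Ω → G) (hX : Measurable X) (hε : Measurable ε)
    (hind : IndepFun X ε P)
    (L : F → G) (hL : Measurable L)
    (Y : Ω → G) (hY : Y = fun ω => L (X ω) + ε ω)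
    (ν : Measure G) [SigmaFinite ν]
    (ρ : F → G → ℝ≥0∞) (hρ : Measurable (Function.uncurry ρ))
    (hdens : ∀ x, P.map (fun ω => ε ω + L x) = ν.withDensity (ρ x))
    (hpos : ∀ᵐ p ∂((P.map X).prod ν), 0 < ρ p.1 p.2) :
    ∀ N : Set G, MeasurableSet N → P.map Y N = 0 →
      ∀ x₀ : F, P.map (fun ω => ε ω + L x₀) N = 0 := by
  intro N hN hYN x₀
  have hρx : ∀ x : F, Measurable (ρ x) := fun x => hρ.of_uncurry_left
  set μX := P.map X with hμX
  haveI : IsProbabilityMeasure μX := Measure.isProbabilityMeasure_map hX.aemeasurable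
  set με := P.map ε with hμε
  have hmap : P.map (fun ω => (X ω, ε ω)) = μX.prod με :=
    (indepFun_iff_map_prod_eq_prod_map_map hX.aemeasurable hε.aemeasurable).mp hind
  have hadd : Measurable (fun p : G × G => p.1 + p.2) := measurable_add
  have hmeasf : Measurable (fun p : F × G => L p.1 + p.2) :=
    (hL.comp measurable_fst).add measurable_snd
  -- express the x-section
  have hsec : ∀ x : F, με ((fun e => L x + e) ⁻¹' N) = ∫⁻ z in N, ρ x z ∂ν := by
    intro x
    have hm : Measurable (fun e : G => L x + e) := measurable_const.add measurable_id'
    have h1 : με.map (fun e => L x + e) = P.map (fun ω => ε ω + L x) := by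
      rw [hμε, Measure.map_map hm hε]
      congr 1
      ext ω
      simp [add_comm]
    have h2 : με ((fun e => L x + e) ⁻¹' N)
        = (με.map (fun e => L x + e)) N := by
      rw [Measure.map_apply hm hN]
    rw [h2, h1, hdens x, withDensity_apply _ hN]
  -- rewrite μ_Y N as an iterated integral
  have h1 : P.map Y N = ∫⁻ x, ∫⁻ z in N, ρ x z ∂ν ∂μX := by
    have hc : P.map Y = (P.map (fun ω => (X ω, ε ω))).map (fun p : F × G => L p.1 + p.2) := by
      rw [Measure.map_map hmeasf (hX.prodMk hε), hY]
      rfl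
    rw [hc, hmap, Measure.map_apply hmeasf hN, Measure.prod_apply (hmeasf hN)]
    refine lintegral_congr fun x => ?_
    rw [← hsec x]
    rfl
  rw [h1] at hYN
  have hg : Measurable fun x => ∫⁻ z in N, ρ x z ∂ν :=
    Measurable.lintegral_prod_right' (ν := ν.restrict N) hρ
  have hae0 : ∀ᵐ x ∂μX, (∫⁻ z in N, ρ x z ∂ν) = 0 :=
    (lintegral_eq_zero_iff hg).mp hYN
  have haepos : ∀ᵐ x ∂μX, ∀ᵐ z ∂ν, 0 < ρ x z :=
    Measure.ae_ae_of_ae_prod hpos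
  haveI : (MeasureTheory.ae μX).NeBot :=
    ae_neBot.2 (IsProbabilityMeasure.ne_zero μX)
  obtain ⟨x, hx0, hxpos⟩ := (hae0.and haepos).exists
  have hνN : ν N = 0 := by
    have h2 : ∀ᵐ z ∂ν, z ∈ N → ρ x z = 0 :=
      (setLIntegral_eq_zero_iff hN (hρx x)).mp hx0
    have h3 : ∀ᵐ z ∂ν, z ∉ N := by
      filter_upwards [h2, hxpos] with z hz1 hz2 hzN
      exact absurd (hz1 hzN) (ne_of_gt hz2)
    simpa [ae_iff] using h3
  rw [hdens x₀, withDensity_apply _ hN, Measure.restrict_eq_zero.mpr hνN,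
    lintegral_zero_measure]
end

section
/- Let μ₁, μ₂ : 𝒢 → probability measures on (F,𝒻) be two regular conditional distributions of X given Y (both satisfying μᵢ(U,Y(ω)) = E[1_U(X)|σ(Y)](ω) a.s. for each Borel U, measurability in y, and countable additivity in U). Suppose A ⊆ G is contained in the topological support of μ_Y, with either A ⊆ closure(interior(A)) or μ_Y(A) = 1, and both y ↦ μ₁(U,y) and y ↦ μ₂(U,y) are continuous on A (in the relative topology) for all U in a measure-determining class 𝒻₀. Then μ₁(U,y) = μ₂(U,y) for all U ∈ 𝒻 and all y ∈ A. -/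
open MeasureTheory ProbabilityTheory Filter

lemma map_ae_eq_of_comp_ae_eq {Ω G : Type*} [MeasurableSpace Ω] [MeasurableSpace G]
    (P : Measure Ω) (Y : Ω → G) (hY : Measurable Y) (f g : G → ℝ)
    (hf : AEMeasurable f (P.map Y)) (hg : AEMeasurable g (P.map Y))
    (h : (fun ω => f (Y ω)) =ᵐ[P] fun ω => g (Y ω)) : f =ᵐ[P.map Y] g := by
  have h1 : f =ᵐ[P.map Y] hf.mk f := hf.ae_eq_mk
  have h2 : g =ᵐ[P.map Y] hg.mk g := hg.ae_eq_mk
  have e1 : (fun ω => f (Y ω)) =ᵐ[P] fun ω => hf.mk f (Y ω) :=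
    ae_eq_comp hY.aemeasurable h1
  have e2 : (fun ω => g (Y ω)) =ᵐ[P] fun ω => hg.mk g (Y ω) :=
    ae_eq_comp hY.aemeasurable h2
  have c1 : (fun ω => hf.mk f (Y ω)) =ᵐ[P] fun ω => hg.mk g (Y ω) :=
    e1.symm.trans (h.trans e2)
  have hS : MeasurableSet {y | ¬ hf.mk f y = hg.mk g y} :=
    (measurableSet_eq_fun hf.measurable_mk hg.measurable_mk).compl
  have key : hf.mk f =ᵐ[P.map Y] hg.mk g := by
    have hz : P.map Y {y | ¬ hf.mk f y = hg.mk g y} = 0 := by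
      rw [Measure.map_apply hY hS]
      exact ae_iff.mp c1
    exact ae_iff.mpr hz
  exact h1.trans (key.trans h2.symm)

lemma eq_on_of_ae_eq_cont {G : Type*} [TopologicalSpace G] [MeasurableSpace G]
    [OpensMeasurableSpace G]
    (ν : Measure G) [IsProbabilityMeasure ν] (f g : G → ℝ)
    (hfg : f =ᵐ[ν] g) (A : Set G)
    (hsupp : ∀ y ∈ A, ∀ V : Set G, IsOpen V → y ∈ V → 0 < ν V)
    (hA : A ⊆ closure (interior A) ∨ ν A = 1)
    (hf : ContinuousOn f A) (hg : ContinuousOn g A) :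
    ∀ y ∈ A, f y = g y := by
  intro y hy
  by_contra hne
  have hN : ν {z | ¬ f z = g z} = 0 := ae_iff.mp hfg
  have hd : ContinuousWithinAt (fun z => f z - g z) A y := (hf y hy).sub (hg y hy)
  have hne' : f y - g y ≠ 0 := sub_ne_zero.mpr hne
  have hev : ∀ᶠ z in nhdsWithin y A, f z - g z ≠ 0 :=
    hd.eventually_ne hne'
  obtain ⟨V, hVopen, hyV, hVsub⟩ := mem_nhdsWithin.mp hev
  have hVN : V ∩ A ⊆ {z | ¬ f z = g z} := fun z hz =>
    fun hEq => hVsub hz (sub_eq_zero.mpr hEq)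
  rcases hA with h | h
  · obtain ⟨w, hwV, hwInt⟩ := mem_closure_iff.mp (h hy) V hVopen hyV
    have hWpos : 0 < ν (V ∩ interior A) :=
      hsupp w (interior_subset hwInt) _ (hVopen.inter isOpen_interior) ⟨hwV, hwInt⟩
    have : ν (V ∩ interior A) = 0 :=
      le_antisymm (le_trans (measure_mono
        (fun z hz => hVN ⟨hz.1, interior_subset hz.2⟩)) hN.le) zero_le
    exact absurd this hWpos.ne'
  · have hVA : ν (V ∩ A) = 0 :=
      le_antisymm (le_trans (measure_mono hVN) hN.le) zero_le
    have hcover : A ⊆ (V ∩ A) ∪ Vᶜ := fun z hz => by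
      by_cases hzV : z ∈ V
      · exact Or.inl ⟨hzV, hz⟩
      · exact Or.inr hzV
    have h1le : (1 : ENNReal) ≤ ν Vᶜ := by
      calc (1 : ENNReal) = ν A := h.symm
      _ ≤ ν (V ∩ A) + ν Vᶜ := le_trans (measure_mono hcover) (measure_union_le _ _)
      _ = ν Vᶜ := by rw [hVA, zero_add]
    have hVc : ν Vᶜ = 1 := le_antisymm prob_le_one h1le
    have : ν V = 0 := (prob_compl_eq_one_iff hVopen.measurableSet).mp hVc
    exact absurd this (hsupp y hy V hVopen hyV).ne'

/-- Partial uniqueness of posterior distributions: if `μ₁, μ₂` are two regular conditional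
distributions of `X` given `Y`, `A` is a subset of the topological support of `μ_Y` with
`A ⊆ closure (interior A)` or `μ_Y A = 1`, and both are continuous on `A` (in the relative
topology) on a measure-determining class `𝒻₀`, then they coincide on `A`. -/
theorem stmt7 {Ω F G : Type*} [mΩ : MeasurableSpace Ω]
    [TopologicalSpace F] [MeasurableSpace F] [BorelSpace F] [PolishSpace F]
    [TopologicalSpace G] [MeasurableSpace G] [BorelSpace G] [PolishSpace G]
    (P : Measure Ω) [IsProbabilityMeasure P] (hP : P.IsComplete)
    (X : Ω → F) (Y : Ω → G) (hX : Measurable X) (hY : Measurable Y)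
    (μ1 μ2 : G → Measure F)
    (h1prob : ∀ y, IsProbabilityMeasure (μ1 y)) (h2prob : ∀ y, IsProbabilityMeasure (μ2 y))
    (h1meas : ∀ U : Set F, MeasurableSet U →
      AEMeasurable (fun y => (μ1 y U).toReal) (P.map Y))
    (h2meas : ∀ U : Set F, MeasurableSet U →
      AEMeasurable (fun y => (μ2 y U).toReal) (P.map Y))
    (h1cond : ∀ U : Set F, MeasurableSet U →
      (fun ω => (μ1 (Y ω) U).toReal) =ᵐ[P]
        P[fun ω => Set.indicator U (fun _ => (1 : ℝ)) (X ω)|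
          MeasurableSpace.comap Y inferInstance])
    (h2cond : ∀ U : Set F, MeasurableSet U →
      (fun ω => (μ2 (Y ω) U).toReal) =ᵐ[P]
        P[fun ω => Set.indicator U (fun _ => (1 : ℝ)) (X ω)|
          MeasurableSpace.comap Y inferInstance])
    (F0 : Set (Set F)) (hF0meas : ∀ U ∈ F0, MeasurableSet U)
    (hdet : ∀ m1 m2 : Measure F, IsProbabilityMeasure m1 → IsProbabilityMeasure m2 →
      (∀ U ∈ F0, m1 U = m2 U) → m1 = m2)
    (A : Set G)
    (hsupp : ∀ y ∈ A, ∀ V : Set G, IsOpen V → y ∈ V → 0 < P.map Y V)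
    (hA : A ⊆ closure (interior A) ∨ P.map Y A = 1)
    (h1cont : ∀ U ∈ F0, ContinuousOn (fun y => (μ1 y U).toReal) A)
    (h2cont : ∀ U ∈ F0, ContinuousOn (fun y => (μ2 y U).toReal) A) :
    ∀ y ∈ A, μ1 y = μ2 y := by
  haveI : IsProbabilityMeasure (P.map Y) := Measure.isProbabilityMeasure_map hY.aemeasurable
  intro y hy
  refine hdet _ _ (h1prob y) (h2prob y) (fun U hU => ?_)
  have hUm := hF0meas U hU
  have hcomp : (fun ω => (μ1 (Y ω) U).toReal) =ᵐ[P] fun ω => (μ2 (Y ω) U).toReal :=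
    (h1cond U hUm).trans (h2cond U hUm).symm
  have hfg : (fun y => (μ1 y U).toReal) =ᵐ[P.map Y] fun y => (μ2 y U).toReal :=
    map_ae_eq_of_comp_ae_eq P Y hY _ _ (h1meas U hUm) (h2meas U hUm) hcomp
  have heq := eq_on_of_ae_eq_cont (P.map Y) _ _ hfg A hsupp hA
    (h1cont U hU) (h2cont U hU) y hy
  haveI := h1prob y; haveI := h2prob y
  exact (ENNReal.toReal_eq_toReal_iff' (measure_ne_top _ _) (measure_ne_top _ _)).mp heq
end

section
/- Let Y = L(X) + ε with X and ε independent and L : F → G Borel measurable. Then the topological support of μ_Y is the smallest closed set S ⊆ G such that μ_{ε+L(x)}(S) = 1 for μ_X-almost every x. Moreover, if μ_{ε+L(x)} is equivalent to a fixed probability measure ν for every x ∈ F, then the topological supports of μ_Y and ν coincide. -/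
open MeasureTheory ProbabilityTheory
open scoped ENNReal

/-- For `Y = L(X) + ε` with `X` and `ε` independent, the topological support of `μ_Y` is the
smallest closed set `S` with `μ_{ε+L(x)}(S) = 1` for `μ_X`-a.e. `x`; moreover, if each
`μ_{ε+L(x)}` is equivalent to a fixed probability measure `ν`, then `S` is also the topological
support of `ν` (i.e. the supports of `μ_Y` and `ν` coincide). -/
theorem stmt10 {Ω F G : Type*} [mΩ : MeasurableSpace Ω]
    [MeasurableSpace F] [StandardBorelSpace F]
    [TopologicalSpace G] [SecondCountableTopology G] [MeasurableSpace G] [BorelSpace G]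
    [AddCommGroup G] [IsTopologicalAddGroup G]
    (P : Measure Ω) [IsProbabilityMeasure P]
    (X : Ω → F) (ε : Ω → G) (hX : Measurable X) (hε : Measurable ε)
    (hind : IndepFun X ε P)
    (L : F → G) (hL : Measurable L)
    (Y : Ω → G) (hY : Y = fun ω => L (X ω) + ε ω) :
    ∃ S : Set G, IsClosed S ∧
      P.map Y S = 1 ∧ (∀ C : Set G, IsClosed C → P.map Y C = 1 → S ⊆ C) ∧
      (∀ᵐ x ∂(P.map X), P.map (fun ω => ε ω + L x) S = 1) ∧
      (∀ C : Set G, IsClosed C →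
        (∀ᵐ x ∂(P.map X), P.map (fun ω => ε ω + L x) C = 1) → S ⊆ C) ∧
      (∀ ν : Measure G, IsProbabilityMeasure ν →
        (∀ x, P.map (fun ω => ε ω + L x) ≪ ν ∧ ν ≪ P.map (fun ω => ε ω + L x)) →
        ν S = 1 ∧ ∀ C : Set G, IsClosed C → ν C = 1 → S ⊆ C) := by
  classical
  have hY' : Measurable Y := by subst hY; exact (hL.comp hX).add hε
  set μX := P.map X with hμX
  set με := P.map ε with hμε
  haveI : IsProbabilityMeasure μX := Measure.isProbabilityMeasure_map hX.aemeasurable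
  haveI : IsProbabilityMeasure με := Measure.isProbabilityMeasure_map hε.aemeasurable
  haveI : IsProbabilityMeasure (P.map Y) := Measure.isProbabilityMeasure_map hY'.aemeasurable
  haveI hxprob : ∀ x : F, IsProbabilityMeasure (P.map (fun ω => ε ω + L x)) := fun x =>
    Measure.isProbabilityMeasure_map ((hε.add_const (L x)).aemeasurable)
  -- each fiber measure as a map of με
  have hfib : ∀ x : F, P.map (fun ω => ε ω + L x) = με.map (fun e => e + L x) := by
    intro x
    rw [hμε, Measure.map_map (measurable_add_const (L x)) hε]
    rfl
  -- mixture identity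
  have hprod : P.map (fun ω => (X ω, ε ω)) = μX.prod με :=
    (indepFun_iff_map_prod_eq_prod_map_map hX.aemeasurable hε.aemeasurable).mp hind
  have hg : Measurable (fun p : F × G => L p.1 + p.2) :=
    (hL.comp measurable_fst).add measurable_snd
  have hmix : ∀ A : Set G, MeasurableSet A →
      P.map Y A = ∫⁻ x, P.map (fun ω => ε ω + L x) A ∂μX := by
    intro A hA
    have h1 : P.map Y = (μX.prod με).map (fun p : F × G => L p.1 + p.2) := by
      rw [← hprod, Measure.map_map hg (hX.prodMk hε), hY]
      rfl
    rw [h1, Measure.map_apply hg hA, Measure.prod_apply (hg hA)]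
    refine lintegral_congr fun x => ?_
    have hpre : Prod.mk x ⁻¹' ((fun p : F × G => L p.1 + p.2) ⁻¹' A)
        = (fun e => e + L x) ⁻¹' A := by
      ext e; simp [add_comm]
    rw [hpre, hfib x, Measure.map_apply (measurable_add_const (L x)) hA]
  -- construct S via a countable basis
  obtain ⟨B, hBc, -, hB⟩ := TopologicalSpace.exists_countable_basis G
  set N : Set G := ⋃₀ {U ∈ B | P.map Y U = 0} with hN
  have hNopen : IsOpen N := isOpen_sUnion fun U hU => hB.isOpen hU.1
  have hNnull : P.map Y N = 0 :=
    (measure_sUnion_null_iff (hBc.mono (Set.sep_subset _ _))).2 fun U hU => hU.2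
  have hSclosed : IsClosed Nᶜ := hNopen.isClosed_compl
  have h2 : P.map Y Nᶜ = 1 := by
    rw [prob_compl_eq_one_sub hNopen.measurableSet, hNnull]; simp
  have h3 : ∀ C : Set G, IsClosed C → P.map Y C = 1 → Nᶜ ⊆ C := by
    intro C hC hC1
    rw [← Set.compl_subset_compl, compl_compl]
    intro u hu
    obtain ⟨U, hUB, huU, hUC⟩ := hB.isOpen_iff.mp hC.isOpen_compl u hu
    have hUnull : P.map Y U = 0 := by
      refine measure_mono_null hUC ?_
      rw [prob_compl_eq_one_sub hC.measurableSet, hC1]; simp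
    exact Set.mem_sUnion.2 ⟨U, ⟨hUB, hUnull⟩, huU⟩
  have h4 : ∀ᵐ x ∂μX, P.map (fun ω => ε ω + L x) Nᶜ = 1 := by
    have hS : MeasurableSet Nᶜ := hNopen.measurableSet.compl
    have h1 : (1 : ℝ≥0∞) = ∫⁻ x, P.map (fun ω => ε ω + L x) Nᶜ ∂μX := by
      rw [← hmix _ hS, h2]
    have hle : (fun x => P.map (fun ω => ε ω + L x) Nᶜ) ≤ᵐ[μX] fun _ => 1 :=
      Filter.Eventually.of_forall fun x => prob_le_one
    have := ae_eq_of_ae_le_of_lintegral_le hle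
      (by rw [← h1]; exact ENNReal.one_ne_top) aemeasurable_const
      (by rw [← h1, lintegral_one, measure_univ])
    filter_upwards [this] with x hx using hx
  have h5 : ∀ C : Set G, IsClosed C →
      (∀ᵐ x ∂μX, P.map (fun ω => ε ω + L x) C = 1) → Nᶜ ⊆ C := by
    intro C hC hae
    refine h3 C hC ?_
    rw [hmix C hC.measurableSet, lintegral_congr_ae (g := fun _ => 1) hae,
      lintegral_one, measure_univ]
  refine ⟨Nᶜ, hSclosed, h2, h3, h4, h5, ?_⟩
  intro ν hν hequiv
  haveI : (ae μX).NeBot := ae_neBot.2 (IsProbabilityMeasure.ne_zero μX)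
  obtain ⟨x₀, hx₀⟩ := h4.exists
  constructor
  · have hnull : P.map (fun ω => ε ω + L x₀) N = 0 := by
      have := prob_compl_eq_one_sub (μ := P.map (fun ω => ε ω + L x₀))
        hNopen.measurableSet.compl
      rw [compl_compl, hx₀] at this
      simpa using this
    have hνN : ν N = 0 := (hequiv x₀).2 hnull
    rw [prob_compl_eq_one_sub hNopen.measurableSet, hνN]; simp
  · intro C hC hC1
    refine h5 C hC (Filter.Eventually.of_forall fun x => ?_)
    have hνCc : ν Cᶜ = 0 := by
      rw [prob_compl_eq_one_sub hC.measurableSet, hC1]; simp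
    have hnull : P.map (fun ω => ε ω + L x) Cᶜ = 0 := (hequiv x).1 hνCc
    have hsub := prob_compl_eq_one_sub (μ := P.map (fun ω => ε ω + L x))
      hC.measurableSet
    rw [hnull] at hsub
    exact le_antisymm prob_le_one (tsub_eq_zero_iff_le.mp hsub.symm)
end

section
/- (Weak posterior convergence) Under Assumption A, fix y with 0 < ∫ ρ(x,y) dμ_X(x) < ∞ and 0 < ∫ ρ(x,y) dμ_{X_n}(x) < ∞ for all n, suppose the discontinuities of x ↦ ρ(x,y) lie in a μ_X-null set, and suppose lim_{C→∞} sup_n ∫_{{ρ(·,y)>C}} ρ(x,y) dμ_{X_n}(x) = 0. If μ_{X_n} converges weakly to μ_X, then the posterior distributions μ_n(·,y) = (∫_· ρ(x,y) dμ_{X_n}(x)) / (∫_F ρ(x,y) dμ_{X_n}(x)) converge weakly to μ(·,y) = (∫_· ρ(x,y) dμ_X(x)) / (∫_F ρ(x,y) dμ_X(x)). -/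
open MeasureTheory ProbabilityTheory Filter Topology
open scoped ENNReal

section Aux

variable {E : Type*} [TopologicalSpace E] [PolishSpace E] [MeasurableSpace E] [BorelSpace E]

/-- Mapping theorem, nonnegative case: weak convergence of probability measures implies
convergence of integrals of bounded measurable a.e.-continuous nonnegative functions. -/
lemma aux_tendsto_integral_nonneg
    (μ : Measure E) (μs : ℕ → Measure E) [IsProbabilityMeasure μ]
    [∀ n, IsProbabilityMeasure (μs n)]
    (hweak : ∀ g : BoundedContinuousFunction E ℝ,
      Tendsto (fun n => ∫ x, g x ∂(μs n)) atTop (𝓝 (∫ x, g x ∂μ)))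
    (g : E → ℝ) (hg : Measurable g) (M : ℝ) (hg0 : ∀ x, 0 ≤ g x) (hgM : ∀ x, g x ≤ M)
    (Nd : Set E) (hNd : μ Nd = 0)
    (hdisc : {x | ¬ ContinuousAt g x} ⊆ Nd) :
    Tendsto (fun n => ∫ x, g x ∂(μs n)) atTop (𝓝 (∫ x, g x ∂μ)) := by
  -- package as ProbabilityMeasures to get the portmanteau open-set condition
  have htend := ProbabilityMeasure.tendsto_iff_forall_integral_tendsto (F := atTop)
    (μ := (⟨μ, inferInstance⟩ : ProbabilityMeasure E))
    (μs := fun n => (⟨μs n, inferInstance⟩ : ProbabilityMeasure E)) |>.mpr hweak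
  have h_opens : ∀ G, IsOpen G → μ G ≤ atTop.liminf fun i => μs i G := by
    refine limsup_measure_closed_le_iff_liminf_measure_open_ge.mp ?_
    intro K hK
    exact ProbabilityMeasure.limsup_measure_closed_le_of_tendsto htend hK
  -- frontier of superlevel sets
  have hfront : ∀ t : ℝ, frontier {x | t < g x} ⊆ Nd ∪ {x | g x = t} := by
    intro t x hx
    by_cases hxN : x ∈ Nd
    · exact Or.inl hxN
    have hc : ContinuousAt g x := by
      by_contra hcc
      exact hxN (hdisc hcc)
    right
    by_contra hne
    rcases lt_or_gt_of_ne hne with hlt | hgt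
    · -- g x < t : x not in the closure
      have hev : {y | g y < t} ∈ 𝓝 x := hc.preimage_mem_nhds (Iio_mem_nhds hlt)
      have hmem : x ∈ interior ({x | t < g x}ᶜ) := by
        rw [mem_interior_iff_mem_nhds]
        filter_upwards [hev] with z hz
        simpa using not_lt.mpr hz.le
      rw [interior_compl] at hmem
      exact hmem hx.1
    · -- t < g x : x in the interior
      have hev : {y | t < g y} ∈ 𝓝 x := hc.preimage_mem_nhds (Ioi_mem_nhds hgt)
      exact hx.2 (mem_interior_iff_mem_nhds.mpr hev)
  have hmain : ∀ t : ℝ, μ {x | g x = t} = 0 →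
      Tendsto (fun n => μs n {x | t < g x}) atTop (𝓝 (μ {x | t < g x})) := by
    intro t ht
    exact tendsto_measure_of_null_frontier h_opens
      (measure_mono_null (hfront t) (measure_union_null hNd ht))
  -- layer cake representation
  have hrep : ∀ (κ : Measure E), ∫ x, g x ∂κ =
      (∫⁻ t in Set.Ioi (0:ℝ), κ {x | t < g x}).toReal := by
    intro κ
    rw [integral_eq_lintegral_of_nonneg_ae (.of_forall hg0) hg.aestronglyMeasurable,
      lintegral_eq_lintegral_meas_lt κ (.of_forall hg0) hg.aemeasurable]
  -- convergence of the lintegrals by dominated convergence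
  have hmble : ∀ (κ : Measure E), Measurable fun t : ℝ => κ {x | t < g x} := by
    intro κ
    exact Antitone.measurable fun s t hst => measure_mono fun x hx => lt_of_le_of_lt hst hx
  have key : Tendsto (fun n => ∫⁻ t in Set.Ioi (0:ℝ), μs n {x | t < g x}) atTop
      (𝓝 (∫⁻ t in Set.Ioi (0:ℝ), μ {x | t < g x})) := by
    apply tendsto_lintegral_of_dominated_convergence
      (bound := Set.indicator (Set.Ioc (0:ℝ) M) 1)
    · intro n; exact hmble (μs n)
    · intro n
      filter_upwards [ae_restrict_mem measurableSet_Ioi] with t ht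
      by_cases htM : t ≤ M
      · rw [Set.indicator_of_mem (Set.mem_Ioc.mpr ⟨ht, htM⟩), Pi.one_apply]
        exact prob_le_one
      · rw [Set.indicator_of_notMem (fun h => htM h.2)]
        have : {x | t < g x} = ∅ := by
          ext x; simpa using ((hgM x).trans (not_le.mp htM).le)
        simp [this]
    · rw [lintegral_indicator measurableSet_Ioc]
      simp only [Pi.one_apply, lintegral_one, Measure.restrict_restrict measurableSet_Ioc,
        Measure.restrict_apply MeasurableSet.univ, Set.univ_inter]
      exact ((measure_mono (Set.inter_subset_left)).trans_lt
        (by simp [Real.volume_Ioc] : volume (Set.Ioc (0:ℝ) M) < ⊤)).ne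
    · -- a.e. convergence
      have hcnt : Set.Countable {t : ℝ | 0 < μ {x | g x = t}} :=
        Measure.countable_meas_level_set_pos hg
      have hae : ∀ᵐ t ∂(volume.restrict (Set.Ioi (0:ℝ))), μ {x | g x = t} = 0 := by
        rw [ae_iff]
        refine measure_mono_null (fun t ht => ?_)
          (hcnt.measure_zero (volume.restrict (Set.Ioi (0:ℝ))))
        simp only [Set.mem_setOf_eq] at ht ⊢
        exact pos_iff_ne_zero.mpr ht
      filter_upwards [hae] with t ht
      exact hmain t ht
  have hfin : (∫⁻ t in Set.Ioi (0:ℝ), μ {x | t < g x}) ≠ ∞ := by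
    rw [← lintegral_eq_lintegral_meas_lt μ (.of_forall hg0) hg.aemeasurable]
    refine ne_of_lt (lt_of_le_of_lt (lintegral_mono fun x =>
      ENNReal.ofReal_le_ofReal (hgM x)) ?_)
    simp [lintegral_const]
  have := (ENNReal.tendsto_toReal hfin).comp key
  simp only [Function.comp_def] at this
  simpa only [hrep] using this

/-- Mapping theorem: weak convergence of probability measures implies convergence of integrals
of bounded measurable a.e.-continuous functions. -/
lemma aux_tendsto_integral
    (μ : Measure E) (μs : ℕ → Measure E) [IsProbabilityMeasure μ]
    [∀ n, IsProbabilityMeasure (μs n)]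
    (hweak : ∀ g : BoundedContinuousFunction E ℝ,
      Tendsto (fun n => ∫ x, g x ∂(μs n)) atTop (𝓝 (∫ x, g x ∂μ)))
    (g : E → ℝ) (hg : Measurable g) (M : ℝ) (hgb : ∀ x, |g x| ≤ M)
    (Nd : Set E) (hNd : μ Nd = 0)
    (hdisc : {x | ¬ ContinuousAt g x} ⊆ Nd) :
    Tendsto (fun n => ∫ x, g x ∂(μs n)) atTop (𝓝 (∫ x, g x ∂μ)) := by
  have hint : ∀ (κ : Measure E) [IsProbabilityMeasure κ], Integrable g κ := by
    intro κ _
    exact (integrable_const M).mono' hg.aestronglyMeasurable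
      (.of_forall fun x => by simpa [Real.norm_eq_abs] using hgb x)
  have h1 := aux_tendsto_integral_nonneg μ μs hweak (fun x => g x + M)
    (hg.add_const M) (M + M)
    (fun x => show (0:ℝ) ≤ g x + M by have := (abs_le.mp (hgb x)).1; linarith)
    (fun x => show g x + M ≤ M + M by have := (abs_le.mp (hgb x)).2; linarith)
    Nd hNd
    (fun x hx => hdisc fun hc => hx (hc.add continuousAt_const))
  have hadd : ∀ (κ : Measure E) [IsProbabilityMeasure κ],
      ∫ x, (g x + M) ∂κ = ∫ x, g x ∂κ + M := by
    intro κ _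
    rw [integral_add (hint κ) (integrable_const M), integral_const]
    simp
  simp only [hadd] at h1
  simpa using h1.sub_const M

/-- Key convergence lemma: for bounded continuous `f`, `∫ f ρ dμₙ → ∫ f ρ dμ` under weak
convergence, a.e.-continuity of `ρ`, and uniform integrability of the family `{ρ dμₙ}`. -/
lemma aux_tendsto_integral_mul
    (μ : Measure E) (μs : ℕ → Measure E) [IsProbabilityMeasure μ]
    [∀ n, IsProbabilityMeasure (μs n)]
    (hweak : ∀ g : BoundedContinuousFunction E ℝ,
      Tendsto (fun n => ∫ x, g x ∂(μs n)) atTop (𝓝 (∫ x, g x ∂μ)))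
    (ρy : E → ℝ) (hρy : Measurable ρy) (hρnn : ∀ x, 0 ≤ ρy x)
    (hμint : Integrable ρy μ) (hμsint : ∀ n, Integrable ρy (μs n))
    (Nd : Set E) (hNd : μ Nd = 0) (hdisc : {x | ¬ ContinuousAt ρy x} ⊆ Nd)
    (hui : ∀ δ : ℝ, 0 < δ → ∃ C : ℝ, ∀ n,
      ∫ x in {x | C < ρy x}, ρy x ∂(μs n) < δ)
    (f : BoundedContinuousFunction E ℝ) :
    Tendsto (fun n => ∫ x, f x * ρy x ∂(μs n)) atTop (𝓝 (∫ x, f x * ρy x ∂μ)) := by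
  rw [Metric.tendsto_atTop]
  intro ε hε
  have hδpos : 0 < ε / (3 * (‖f‖ + 1)) := by positivity
  set δ := ε / (3 * (‖f‖ + 1)) with hδdef
  obtain ⟨C₁, hC₁⟩ := hui δ hδpos
  -- tail control for μ
  have htail : Tendsto (fun m : ℕ => ∫ x in {x | (m:ℝ) < ρy x}, ρy x ∂μ) atTop (𝓝 0) := by
    have := tendsto_integral_of_dominated_convergence (μ := μ)
      (F := fun m : ℕ => Set.indicator {x | (m:ℝ) < ρy x} ρy) (f := fun _ => (0:ℝ)) ρy
      (fun m => (hρy.indicator (measurableSet_lt measurable_const hρy)).aestronglyMeasurable)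
      hμint
      (fun m => .of_forall fun x => by
        have h1 : Set.indicator {x | (m:ℝ) < ρy x} ρy x ≤ ρy x :=
          Set.indicator_le_self' (fun x _ => hρnn x) x
        have h2 : (0:ℝ) ≤ Set.indicator {x | (m:ℝ) < ρy x} ρy x :=
          Set.indicator_nonneg (fun x _ => hρnn x) x
        simpa [Real.norm_eq_abs, abs_of_nonneg h2] using h1)
      (.of_forall fun x => by
        have : ∀ᶠ m : ℕ in atTop, Set.indicator {x | (m:ℝ) < ρy x} ρy x = 0 := by
          filter_upwards [eventually_ge_atTop ⌈ρy x⌉₊] with m hm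
          apply Set.indicator_of_notMem
          simp only [Set.mem_setOf_eq, not_lt]
          exact (Nat.le_ceil (ρy x)).trans (by exact_mod_cast hm)
        exact Tendsto.congr' (this.mono fun m hm => hm.symm) tendsto_const_nhds)
    simp only [integral_zero] at this
    refine this.congr fun m => ?_
    rw [integral_indicator (measurableSet_lt measurable_const hρy)]
  obtain ⟨m, hm⟩ := (htail.eventually_lt_const hδpos).exists
  set C : ℝ := max C₁ (max (m:ℝ) 1) with hCdef
  have hCpos : 0 < C := lt_of_lt_of_le one_pos ((le_max_right _ _).trans (le_max_right _ _))
  have hsubset : ∀ c : ℝ, c ≤ C → {x | C < ρy x} ⊆ {x | c < ρy x} :=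
    fun c hc x hx => lt_of_le_of_lt hc hx
  have hμtail : ∫ x in {x | C < ρy x}, ρy x ∂μ < δ := by
    refine lt_of_le_of_lt (setIntegral_mono_set hμint.integrableOn
      (.of_forall fun x => hρnn x)
      (HasSubset.Subset.eventuallyLE (hsubset _ ((le_max_left _ _).trans (le_max_right _ _))))) hm
  have hμstail : ∀ n, ∫ x in {x | C < ρy x}, ρy x ∂(μs n) < δ := by
    intro n
    refine lt_of_le_of_lt (setIntegral_mono_set (hμsint n).integrableOn
      (.of_forall fun x => hρnn x)
      (HasSubset.Subset.eventuallyLE (hsubset _ (le_max_left _ _)))) (hC₁ n)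
  -- the truncated function
  set g : E → ℝ := fun x => f x * min (ρy x) C with hgdef
  have hgmeas : Measurable g := f.continuous.measurable.mul (hρy.min measurable_const)
  have hminnn : ∀ x, 0 ≤ min (ρy x) C := fun x => le_min (hρnn x) hCpos.le
  have hgb : ∀ x, |g x| ≤ ‖f‖ * C := by
    intro x
    rw [hgdef, abs_mul]
    refine mul_le_mul ?_ ?_ (abs_nonneg _) (norm_nonneg f)
    · exact (Real.norm_eq_abs _ ▸ f.norm_coe_le_norm x)
    · rw [abs_of_nonneg (hminnn x)]; exact min_le_right _ _
  have hgdisc : {x | ¬ ContinuousAt g x} ⊆ Nd := by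
    intro x hx
    refine hdisc fun hc => hx ?_
    exact f.continuous.continuousAt.mul (hc.min continuousAt_const)
  have hgtend := aux_tendsto_integral μ μs hweak g hgmeas (‖f‖ * C) hgb Nd hNd hgdisc
  -- integrability facts
  have hintfρ : ∀ (κ : Measure E), Integrable ρy κ → Integrable (fun x => f x * ρy x) κ :=
    fun κ hκ => hκ.bdd_mul f.continuous.measurable.aestronglyMeasurable
      (.of_forall fun x => f.norm_coe_le_norm x)
  have hintmin : ∀ (κ : Measure E), Integrable ρy κ → Integrable (fun x => min (ρy x) C) κ :=
    fun κ hκ => hκ.mono' (hρy.min measurable_const).aestronglyMeasurable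
      (.of_forall fun x => by
        rw [Real.norm_eq_abs, abs_of_nonneg (hminnn x)]; exact min_le_left _ _)
  have hintg : ∀ (κ : Measure E), Integrable ρy κ → Integrable g κ :=
    fun κ hκ => (hintmin κ hκ).bdd_mul f.continuous.measurable.aestronglyMeasurable
      (.of_forall fun x => f.norm_coe_le_norm x)
  -- truncation error bound
  have herr : ∀ (κ : Measure E), Integrable ρy κ →
      (∫ x in {x | C < ρy x}, ρy x ∂κ) < δ →
      |∫ x, f x * ρy x ∂κ - ∫ x, g x ∂κ| ≤ ε / 3 := by
    intro κ hκ hκtail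
    have h1 := hintfρ κ hκ
    have h2 := hintg κ hκ
    have hdiff : ∫ x, f x * ρy x ∂κ - ∫ x, g x ∂κ
        = ∫ x, (f x * ρy x - g x) ∂κ := (integral_sub h1 h2).symm
    have hptw : ∀ x, |f x * ρy x - g x| ≤ ‖f‖ * (ρy x - min (ρy x) C) := by
      intro x
      rw [hgdef, ← mul_sub, abs_mul]
      refine mul_le_mul ?_ ?_ (abs_nonneg _) (norm_nonneg f)
      · exact (Real.norm_eq_abs _ ▸ f.norm_coe_le_norm x)
      · rw [abs_of_nonneg (by simp [sub_nonneg, min_le_left])]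
    have hptw2 : ∀ x, ρy x - min (ρy x) C ≤ Set.indicator {x | C < ρy x} ρy x := by
      intro x
      by_cases hx : x ∈ {x | C < ρy x}
      · rw [Set.indicator_of_mem hx]
        have hx' : C < ρy x := hx
        simp only [min_def]
        split_ifs with h
        · linarith
        · linarith
      · rw [Set.indicator_of_notMem hx, min_eq_left (not_lt.mp hx)]
        simp
    have hind : Integrable (Set.indicator {x | C < ρy x} ρy) κ :=
      hκ.indicator (measurableSet_lt measurable_const hρy)
    calc |∫ x, f x * ρy x ∂κ - ∫ x, g x ∂κ|
        = |∫ x, (f x * ρy x - g x) ∂κ| := by rw [hdiff]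
      _ ≤ ∫ x, |f x * ρy x - g x| ∂κ := by
          simpa [Real.norm_eq_abs] using norm_integral_le_integral_norm (fun x => f x * ρy x - g x) (μ := κ)
      _ ≤ ∫ x, ‖f‖ * Set.indicator {x | C < ρy x} ρy x ∂κ := by
          refine integral_mono (h1.sub h2).abs (hind.const_mul _) fun x => ?_
          exact (hptw x).trans (mul_le_mul_of_nonneg_left (hptw2 x) (norm_nonneg f))
      _ = ‖f‖ * ∫ x in {x | C < ρy x}, ρy x ∂κ := by
          rw [integral_const_mul, integral_indicator (measurableSet_lt measurable_const hρy)]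
      _ ≤ ‖f‖ * δ := mul_le_mul_of_nonneg_left hκtail.le (norm_nonneg f)
      _ ≤ (‖f‖ + 1) * δ := by nlinarith [hδpos, norm_nonneg f]
      _ = ε / 3 := by
          rw [hδdef]; field_simp
  -- assemble
  obtain ⟨N, hN⟩ := Metric.tendsto_atTop.mp hgtend (ε / 3) (by positivity)
  refine ⟨N, fun n hn => ?_⟩
  have e1 := herr (μs n) (hμsint n) (hμstail n)
  have e2 := herr μ hμint hμtail
  have e3 := hN n hn
  rw [Real.dist_eq] at e3 ⊢
  have := abs_sub_abs_le_abs_sub (∫ x, f x * ρy x ∂(μs n)) (∫ x, f x * ρy x ∂μ)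
  calc |∫ x, f x * ρy x ∂(μs n) - ∫ x, f x * ρy x ∂μ|
      ≤ |∫ x, f x * ρy x ∂(μs n) - ∫ x, g x ∂(μs n)|
        + |∫ x, g x ∂(μs n) - ∫ x, g x ∂μ|
        + |∫ x, g x ∂μ - ∫ x, f x * ρy x ∂μ| := by
        have := abs_sub_le (∫ x, f x * ρy x ∂(μs n)) (∫ x, g x ∂(μs n)) (∫ x, f x * ρy x ∂μ)
        have h2 := abs_sub_le (∫ x, g x ∂(μs n)) (∫ x, g x ∂μ) (∫ x, f x * ρy x ∂μ)
        linarith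
    _ < ε / 3 + ε / 3 + ε / 3 := by
        have e2' : |∫ x, g x ∂μ - ∫ x, f x * ρy x ∂μ| ≤ ε / 3 := by
          rw [abs_sub_comm]; exact e2
        linarith
    _ = ε := by ring

end Aux

/-- Weak posterior convergence: under Assumption A, for a fixed observation `y` with finite
nonzero normalizing integrals, if the discontinuities of `x ↦ ρ(x,y)` lie in a `μ_X`-null set,
the family `{ρ(·,y) dμ_{X_n}}` is uniformly integrable, and `μ_{X_n} → μ_X` weakly, then the
posterior distributions `μ_n(·,y)` converge weakly to `μ(·,y)` (i.e. the normalized integrals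
of every bounded continuous function converge). -/
theorem stmt12 {Ω F G : Type*} [mΩ : MeasurableSpace Ω]
    [TopologicalSpace F] [PolishSpace F] [MeasurableSpace F] [BorelSpace F]
    [TopologicalSpace G] [PolishSpace G] [MeasurableSpace G] [BorelSpace G]
    [AddCommGroup G] [IsTopologicalAddGroup G]
    (P : Measure Ω) [IsProbabilityMeasure P]
    (X : Ω → F) (Xn : ℕ → Ω → F) (ε : Ω → G)
    (hX : Measurable X) (hXn : ∀ n, Measurable (Xn n)) (hε : Measurable ε)
    (hindX : IndepFun X ε P) (hindXn : ∀ n, IndepFun (Xn n) ε P)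
    (L : F → G) (hL : Continuous L)
    (ν : Measure G) [SigmaFinite ν]
    (ρ : F → G → ℝ) (hρmeas : Measurable (Function.uncurry ρ)) (hρnn : ∀ x z, 0 ≤ ρ x z)
    (hdens : ∀ x, P.map (fun ω => ε ω + L x) =
      ν.withDensity (fun z => ENNReal.ofReal (ρ x z)))
    (y : G)
    (hX0 : 0 < ∫ x, ρ x y ∂(P.map X)) (hXint : Integrable (fun x => ρ x y) (P.map X))
    (hXn0 : ∀ n, 0 < ∫ x, ρ x y ∂(P.map (Xn n)))
    (hXnint : ∀ n, Integrable (fun x => ρ x y) (P.map (Xn n)))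
    (Nd : Set F) (hNd : P.map X Nd = 0)
    (hdisc : {x | ¬ ContinuousAt (fun x => ρ x y) x} ⊆ Nd)
    (hui : ∀ δ : ℝ, 0 < δ → ∃ C : ℝ, ∀ n,
      ∫ x in {x | C < ρ x y}, ρ x y ∂(P.map (Xn n)) < δ)
    (hweak : ∀ g : BoundedContinuousFunction F ℝ,
      Tendsto (fun n => ∫ x, g x ∂(P.map (Xn n))) atTop (𝓝 (∫ x, g x ∂(P.map X)))) :
    ∀ f : BoundedContinuousFunction F ℝ,
      Tendsto (fun n =>
          (∫ x, f x * ρ x y ∂(P.map (Xn n))) / ∫ x, ρ x y ∂(P.map (Xn n)))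
        atTop
        (𝓝 ((∫ x, f x * ρ x y ∂(P.map X)) / ∫ x, ρ x y ∂(P.map X))) := by
  intro f
  haveI : IsProbabilityMeasure (P.map X) := Measure.isProbabilityMeasure_map hX.aemeasurable
  haveI : ∀ n, IsProbabilityMeasure (P.map (Xn n)) :=
    fun n => Measure.isProbabilityMeasure_map (hXn n).aemeasurable
  have hρy : Measurable (fun x => ρ x y) :=
    hρmeas.comp (measurable_id.prodMk measurable_const)
  have key := fun (f : BoundedContinuousFunction F ℝ) =>
    aux_tendsto_integral_mul (P.map X) (fun n => P.map (Xn n)) hweak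
      (fun x => ρ x y) hρy (fun x => hρnn x y) hXint hXnint Nd hNd hdisc hui f
  have h1 := key f
  have h2 := key (BoundedContinuousFunction.const F (1:ℝ))
  simp only [BoundedContinuousFunction.const_apply', one_mul] at h2
  exact h1.div h2 (ne_of_gt hX0)
end

section
/- (Convergence of posterior means) Under Assumption A with F a separable Banach space, fix y with finite nonzero normalizing integrals for μ_X and all μ_{X_n}, suppose the discontinuities of x ↦ ρ(x,y) lie in a μ_X-null set, ‖·‖ρ(·,y) ∈ L¹(μ_X), and for k = 0,1, lim_{C→∞} sup_n ∫_{{‖x‖^k ρ(x,y)>C}} ‖x‖^k ρ(x,y) dμ_{X_n}(x) = 0. If μ_{X_n} → μ_X weakly, then the Bochner-integral posterior means ∫ x dμ_n(x,y) converge in the norm of F to ∫ x dμ(x,y). -/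
open MeasureTheory ProbabilityTheory Filter Topology
open scoped ENNReal

/-- Mapping theorem: weak convergence of probability measures implies convergence of integrals
of bounded, a.e.-continuous Banach-valued functions. -/
lemma weak_tendsto_integral_of_ae_continuous
    {Ω : Type*} [NormedAddCommGroup Ω] [MeasurableSpace Ω] [BorelSpace Ω]
    [SecondCountableTopology Ω]
    {E : Type*} [NormedAddCommGroup E] [NormedSpace ℝ E] [CompleteSpace E]
    (μ : Measure Ω) (hPμ : IsProbabilityMeasure μ) (μs : ℕ → Measure Ω)
    (hprob : ∀ n, IsProbabilityMeasure (μs n))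
    (g : Ω → E) (hgm : ∀ n, AEStronglyMeasurable g (μs n)) (hgμ : AEStronglyMeasurable g μ)
    (M : ℝ) (hM : ∀ x, ‖g x‖ ≤ M)
    (N : Set Ω) (hNm : MeasurableSet N) (hN0 : μ N = 0)
    (hcont : ∀ x ∉ N, ContinuousAt g x)
    (hweak : ∀ f : BoundedContinuousFunction Ω ℝ,
      Tendsto (fun n => ∫ x, f x ∂(μs n)) atTop (𝓝 (∫ x, f x ∂μ))) :
    Tendsto (fun n => ∫ x, g x ∂(μs n)) atTop (𝓝 (∫ x, g x ∂μ)) := by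
  have hM0 : 0 ≤ M := (norm_nonneg (g 0)).trans (hM 0)
  haveI := hPμ
  haveI := hprob
  set Pμ : ProbabilityMeasure Ω := ⟨μ, hPμ⟩ with hPμdef
  set Pn : ℕ → ProbabilityMeasure Ω := fun n => ⟨μs n, hprob n⟩ with hPndef
  have hPt : Tendsto Pn atTop (𝓝 Pμ) :=
    ProbabilityMeasure.tendsto_iff_forall_integral_tendsto.2 hweak
  rw [Metric.tendsto_atTop]
  intro ε hε
  have hε8 : 0 < ε / 8 := by linarith
  set ε' : ℝ := ε / 8 with hε'def
  set δ₀ : ℝ := ε / (16 * (M + 1)) with hδ₀def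
  have hδ₀pos : 0 < δ₀ := by
    apply div_pos hε; positivity
  -- choose radii of continuity
  have hNc : ∀ x : {x : Ω // x ∉ N}, ∃ r : ℝ, 0 < r ∧
      ∀ z : Ω, dist z (x : Ω) < 2 * r → ‖g z - g (x : Ω)‖ < ε' := by
    rintro ⟨x, hx⟩
    obtain ⟨d, hd, hball⟩ := Metric.continuousAt_iff.1 (hcont x hx) ε' hε8
    refine ⟨d / 2, by linarith, fun z hz => ?_⟩
    have := hball (show dist z x < d by linarith)
    rwa [dist_eq_norm] at this
  choose R hRpos hR using hNc
  -- countable subcover of the complement of N by continuity balls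
  obtain ⟨T, hTc, hTeq⟩ := TopologicalSpace.isOpen_iUnion_countable
    (fun p : {x : Ω // x ∉ N} => Metric.ball (p : Ω) (R p)) (fun p => Metric.isOpen_ball)
  have hNcsub : Nᶜ ⊆ ⋃ p ∈ T, Metric.ball (p : Ω) (R p) := by
    rw [hTeq]
    intro x hx
    exact Set.mem_iUnion.2 ⟨⟨x, hx⟩, Metric.mem_ball_self (hRpos ⟨x, hx⟩)⟩
  have hNcne : Nᶜ.Nonempty := by
    apply MeasureTheory.nonempty_of_measure_ne_zero (μ := μ)
    have : μ Nᶜ = 1 := by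
      rw [measure_compl hNm (measure_ne_top μ N), hN0, measure_univ]; simp
    simp [this]
  have hTne : T.Nonempty := by
    rcases hNcne with ⟨x, hx⟩
    rcases Set.mem_iUnion₂.1 (hNcsub hx) with ⟨p, hp, _⟩
    exact ⟨p, hp⟩
  obtain ⟨e, he⟩ := Set.Countable.exists_eq_range hTc hTne
  -- truncate the cover
  set V : ℕ → Set Ω := fun m => ⋃ i ∈ Finset.range m, Metric.ball ((e i : Ω)) (R (e i)) with hVdef
  have hVopen : ∀ m, IsOpen (V m) := fun m => isOpen_biUnion fun i _ => Metric.isOpen_ball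
  have hVmeas : ∀ m, MeasurableSet (V m) := fun m => (hVopen m).measurableSet
  have hVanti : Antitone fun m => (V m)ᶜ := by
    intro a b hab
    apply Set.compl_subset_compl.2
    intro x hx
    rcases Set.mem_iUnion₂.1 hx with ⟨i, hi, hxi⟩
    exact Set.mem_iUnion₂.2 ⟨i, Finset.mem_range.2 ((Finset.mem_range.1 hi).trans_le hab), hxi⟩
  have hVinter : ⋂ m, (V m)ᶜ ⊆ N := by
    rw [← Set.compl_iUnion]
    apply Set.compl_subset_comm.1
    intro x hx
    rcases Set.mem_iUnion₂.1 (hNcsub hx) with ⟨p, hp, hxp⟩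
    rw [he] at hp
    rcases hp with ⟨i, rfl⟩
    apply Set.mem_iUnion.2 ⟨i + 1, ?_⟩
    exact Set.mem_iUnion₂.2 ⟨i, Finset.mem_range.2 (Nat.lt_succ_self i), hxp⟩
  have htendV : Tendsto (fun m => μ (V m)ᶜ) atTop (𝓝 (μ (⋂ m, (V m)ᶜ))) := by
    apply tendsto_measure_iInter_atTop (fun m => (hVmeas m).compl.nullMeasurableSet) hVanti
    exact ⟨0, measure_ne_top μ _⟩
  have hinter0 : μ (⋂ m, (V m)ᶜ) = 0 :=
    le_antisymm (le_trans (measure_mono hVinter) hN0.le) zero_le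
  rw [hinter0] at htendV
  have hδ₀' : (0 : ℝ≥0∞) < ENNReal.ofReal δ₀ := by simp [hδ₀pos]
  obtain ⟨m, hm⟩ := (htendV.eventually_lt_const hδ₀').exists
  set U : Set Ω := V m with hUdef
  have hUopen : IsOpen U := hVopen m
  have hUcmeas : MeasurableSet Uᶜ := (hVmeas m).compl
  have hUc : μ Uᶜ < ENNReal.ofReal δ₀ := hm
  -- centers and radii
  set c : ℕ → Ω := fun i => (e i : Ω) with hcdef
  set rad : ℕ → ℝ := fun i => R (e i) with hraddef
  have hradpos : ∀ i, 0 < rad i := fun i => hRpos (e i)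
  have hradball : ∀ i z, dist z (c i) < 2 * rad i → ‖g z - g (c i)‖ < ε' :=
    fun i z hz => hR (e i) z hz
  -- partition of unity
  set ψ : ℕ → Ω → ℝ := fun i z => max 0 (min 1 (2 - dist z (c i) / rad i)) with hψdef
  have hψcont : ∀ i, Continuous (ψ i) := fun i =>
    continuous_const.max (continuous_const.min (continuous_const.sub
      ((continuous_id.dist continuous_const).div_const _)))
  have hψ0 : ∀ i z, 0 ≤ ψ i z := fun i z => le_max_left _ _
  have hψ1 : ∀ i z, ψ i z ≤ 1 := fun i z => max_le zero_le_one (min_le_left _ _)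
  have hψone : ∀ i z, dist z (c i) < rad i → ψ i z = 1 := by
    intro i z hz
    have h1 : (1:ℝ) ≤ 2 - dist z (c i) / rad i := by
      have : dist z (c i) / rad i ≤ 1 := (div_le_one (hradpos i)).2 hz.le
      linarith
    simp only [hψdef]
    rw [min_eq_left h1, max_eq_right zero_le_one]
  have hψpos : ∀ i z, 0 < ψ i z → dist z (c i) < 2 * rad i := by
    intro i z hz
    by_contra hge
    push_neg at hge
    have h2 : dist z (c i) / rad i ≥ 2 := (le_div_iff₀ (hradpos i)).2 (by linarith)
    have : ψ i z = 0 := by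
      simp only [hψdef]
      rw [max_eq_left]
      exact min_le_of_right_le (by linarith)
    linarith
  set Sm : Ω → ℝ := fun z => ∑ i ∈ Finset.range m, ψ i z with hSmdef
  have hSmcont : Continuous Sm := continuous_finset_sum _ fun i _ => hψcont i
  have hSm0 : ∀ z, 0 ≤ Sm z := fun z => Finset.sum_nonneg fun i _ => hψ0 i z
  set den : Ω → ℝ := fun z => max 1 (Sm z) with hdendef
  have hdenpos : ∀ z, 0 < den z := fun z => lt_of_lt_of_le one_pos (le_max_left _ _)
  have hdencont : Continuous den := continuous_const.max hSmcont
  set φ : ℕ → Ω → ℝ := fun i z => ψ i z / den z with hφdef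
  have hφcont : ∀ i, Continuous (φ i) :=
    fun i => (hψcont i).div hdencont fun z => (hdenpos z).ne'
  have hφ0 : ∀ i z, 0 ≤ φ i z := fun i z => div_nonneg (hψ0 i z) (hdenpos z).le
  have hφ1 : ∀ i z, φ i z ≤ 1 := by
    intro i z
    rw [hφdef, div_le_one (hdenpos z)]
    exact (hψ1 i z).trans (le_max_left _ _)
  have hφsum_le : ∀ z, ∑ i ∈ Finset.range m, φ i z ≤ 1 := by
    intro z
    rw [show ∑ i ∈ Finset.range m, φ i z = Sm z / den z from (Finset.sum_div _ _ _).symm]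
    rw [div_le_one (hdenpos z)]
    exact le_max_right _ _
  have hφsum0 : ∀ z, 0 ≤ ∑ i ∈ Finset.range m, φ i z :=
    fun z => Finset.sum_nonneg fun i _ => hφ0 i z
  have hφsumU : ∀ z ∈ U, ∑ i ∈ Finset.range m, φ i z = 1 := by
    intro z hz
    rcases Set.mem_iUnion₂.1 hz with ⟨i₀, hi₀, hzi₀⟩
    have hψi₀ : ψ i₀ z = 1 := hψone i₀ z (Metric.mem_ball.1 hzi₀)
    have hSm1 : 1 ≤ Sm z := by
      rw [hSmdef]
      calc (1:ℝ) = ψ i₀ z := hψi₀.symm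
      _ ≤ ∑ i ∈ Finset.range m, ψ i z :=
        Finset.single_le_sum (fun i _ => hψ0 i z) hi₀
    have hden : den z = Sm z := max_eq_right hSm1
    rw [show ∑ i ∈ Finset.range m, φ i z = Sm z / den z from (Finset.sum_div _ _ _).symm,
      hden, div_self (by linarith)]
  -- the approximating function
  set h : Ω → E := fun z => ∑ i ∈ Finset.range m, φ i z • g (c i) with hhdef
  have hhcont : Continuous h :=
    continuous_finset_sum _ fun i _ => (hφcont i).smul continuous_const
  have hhbound : ∀ z, ‖h z‖ ≤ M := by
    intro z
    calc ‖h z‖ ≤ ∑ i ∈ Finset.range m, ‖φ i z • g (c i)‖ := norm_sum_le _ _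
    _ = ∑ i ∈ Finset.range m, φ i z * ‖g (c i)‖ := by
        refine Finset.sum_congr rfl fun i _ => ?_
        rw [norm_smul, Real.norm_eq_abs, abs_of_nonneg (hφ0 i z)]
    _ ≤ ∑ i ∈ Finset.range m, φ i z * M :=
        Finset.sum_le_sum fun i _ => mul_le_mul_of_nonneg_left (hM _) (hφ0 i z)
    _ = (∑ i ∈ Finset.range m, φ i z) * M := (Finset.sum_mul _ _ _).symm
    _ ≤ 1 * M := mul_le_mul_of_nonneg_right (hφsum_le z) hM0
    _ = M := one_mul M
  -- pointwise estimate
  have hpw : ∀ z, ‖g z - h z‖ ≤ ε' + (2 * M) * Set.indicator Uᶜ (fun _ => (1:ℝ)) z := by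
    intro z
    by_cases hz : z ∈ U
    · have hind : Set.indicator Uᶜ (fun _ => (1:ℝ)) z = 0 :=
        Set.indicator_of_notMem (by simpa using hz) _
      rw [hind, mul_zero, add_zero]
      have hsum1 := hφsumU z hz
      have hgz : g z = ∑ i ∈ Finset.range m, φ i z • g z := by
        rw [← Finset.sum_smul, hsum1, one_smul]
      calc ‖g z - h z‖ = ‖∑ i ∈ Finset.range m, φ i z • (g z - g (c i))‖ := by
            rw [hhdef]
            congr 1
            rw [eq_comm]
            calc ∑ i ∈ Finset.range m, φ i z • (g z - g (c i))
                = ∑ i ∈ Finset.range m, (φ i z • g z - φ i z • g (c i)) := by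
                  refine Finset.sum_congr rfl fun i _ => smul_sub _ _ _
              _ = (∑ i ∈ Finset.range m, φ i z • g z)
                    - ∑ i ∈ Finset.range m, φ i z • g (c i) := Finset.sum_sub_distrib _ _
              _ = g z - ∑ i ∈ Finset.range m, φ i z • g (c i) := by rw [← hgz]
        _ ≤ ∑ i ∈ Finset.range m, ‖φ i z • (g z - g (c i))‖ := norm_sum_le _ _
        _ ≤ ∑ i ∈ Finset.range m, φ i z * ε' := by
            refine Finset.sum_le_sum fun i _ => ?_
            rw [norm_smul, Real.norm_eq_abs, abs_of_nonneg (hφ0 i z)]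
            rcases eq_or_lt_of_le (hφ0 i z) with heq | hlt
            · rw [← heq]; simp
            · have hψpos' : 0 < ψ i z := by
                by_contra hle
                push_neg at hle
                have : ψ i z = 0 := le_antisymm hle (hψ0 i z)
                rw [hφdef] at hlt
                simp only [this, zero_div] at hlt
                exact lt_irrefl _ hlt
              have hd := hψpos i z hψpos'
              exact mul_le_mul_of_nonneg_left (hradball i z hd).le (hφ0 i z)
        _ = (∑ i ∈ Finset.range m, φ i z) * ε' := (Finset.sum_mul _ _ _).symm
        _ ≤ 1 * ε' := mul_le_mul_of_nonneg_right (hφsum_le z) hε8.le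
        _ = ε' := one_mul ε'
    · have hind : Set.indicator Uᶜ (fun _ => (1:ℝ)) z = 1 :=
        Set.indicator_of_mem (by simpa using hz) _
      rw [hind, mul_one]
      calc ‖g z - h z‖ ≤ ‖g z‖ + ‖h z‖ := norm_sub_le _ _
        _ ≤ M + M := add_le_add (hM z) (hhbound z)
        _ ≤ ε' + 2 * M := by linarith
  -- key integral bound, for any probability measure
  have key : ∀ (ν : Measure Ω), IsProbabilityMeasure ν → AEStronglyMeasurable g ν →
      ‖(∫ x, g x ∂ν) - ∫ x, h x ∂ν‖ ≤ ε' + (2 * M) * (ν Uᶜ).toReal := by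
    intro ν hν hgν
    haveI := hν
    have hgint : Integrable g ν := by
      refine ⟨hgν, ?_⟩
      exact (hasFiniteIntegral_const M).mono' (Eventually.of_forall hM)
    have hhint : Integrable h ν := by
      refine ⟨hhcont.aestronglyMeasurable, ?_⟩
      exact (hasFiniteIntegral_const M).mono' (Eventually.of_forall hhbound)
    have hbint : Integrable (fun z => ε' + (2 * M) * Set.indicator Uᶜ (fun _ => (1:ℝ)) z) ν := by
      exact (integrable_const ε').add (((integrable_const (1:ℝ)).indicator hUcmeas).const_mul _)
    rw [← integral_sub hgint hhint]
    refine le_trans (norm_integral_le_integral_norm _) ?_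
    refine le_trans (integral_mono ((hgint.sub hhint).norm) hbint hpw) ?_
    rw [integral_add (integrable_const _) (((integrable_const (1:ℝ)).indicator hUcmeas).const_mul _)]
    rw [integral_const, integral_const_mul, integral_indicator_const _ hUcmeas]
    simp [measure_univ]
    exact le_rfl
  -- convergence of the integrals of h
  have hhconv : Tendsto (fun n => ∫ x, h x ∂(μs n)) atTop (𝓝 (∫ x, h x ∂μ)) := by
    have heq : ∀ (ν : Measure Ω), IsProbabilityMeasure ν →
        ∫ x, h x ∂ν = ∑ i ∈ Finset.range m, (∫ x, φ i x ∂ν) • g (c i) := by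
      intro ν hν
      haveI := hν
      rw [hhdef]
      rw [integral_finset_sum]
      · exact Finset.sum_congr rfl fun i _ => integral_smul_const _ _
      · intro i _
        apply Integrable.smul_const
        refine ⟨(hφcont i).aestronglyMeasurable, ?_⟩
        apply (hasFiniteIntegral_const (1:ℝ)).mono' (Eventually.of_forall ?_)
        intro z
        rw [Real.norm_eq_abs, abs_of_nonneg (hφ0 i z)]
        exact hφ1 i z
    simp only [fun n => heq (μs n) (hprob n), heq μ hPμ]
    apply tendsto_finset_sum
    intro i _
    apply Tendsto.smul_const
    set Φ : BoundedContinuousFunction Ω ℝ :=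
      BoundedContinuousFunction.ofNormedAddCommGroup (φ i) (hφcont i) 1 (fun z => by
        rw [Real.norm_eq_abs, abs_of_nonneg (hφ0 i z)]; exact hφ1 i z) with hΦdef
    have := hweak Φ
    simpa [hΦdef, BoundedContinuousFunction.coe_ofNormedAddCommGroup] using this
  -- portmanteau: eventually μs n Uᶜ < δ₀
  have hlimsup : Filter.limsup (fun n => (μs n) Uᶜ) atTop ≤ μ Uᶜ := by
    have := MeasureTheory.ProbabilityMeasure.limsup_measure_closed_le_of_tendsto hPt
      (isClosed_compl_iff.2 hUopen)
    exact this
  have hev : ∀ᶠ n in atTop, (μs n) Uᶜ < ENNReal.ofReal δ₀ :=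
    Filter.eventually_lt_of_limsup_lt (lt_of_le_of_lt hlimsup hUc)
  have hev2 : ∀ᶠ n in atTop, dist (∫ x, g x ∂(μs n)) (∫ x, g x ∂μ) < ε := by
    have hev3 : ∀ᶠ n in atTop, ‖(∫ x, h x ∂(μs n)) - ∫ x, h x ∂μ‖ < ε' := by
      have := Metric.tendsto_atTop.1 hhconv ε' hε8
      rcases this with ⟨n₀, hn₀⟩
      filter_upwards [eventually_ge_atTop n₀] with n hn
      rw [← dist_eq_norm]
      exact hn₀ n hn
    filter_upwards [hev, hev3] with n hn1 hn3
    have hb1 : ‖(∫ x, g x ∂(μs n)) - ∫ x, h x ∂(μs n)‖ ≤ ε' + (2 * M) * δ₀ := by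
      refine le_trans (key (μs n) (hprob n) (hgm n)) ?_
      have : ((μs n) Uᶜ).toReal < δ₀ := by
        rw [← ENNReal.lt_ofReal_iff_toReal_lt (measure_ne_top _ _)] at *
        exact hn1
      nlinarith [(ENNReal.toReal_nonneg : (0:ℝ) ≤ ((μs n) Uᶜ).toReal)]
    have hb2 : ‖(∫ x, g x ∂μ) - ∫ x, h x ∂μ‖ ≤ ε' + (2 * M) * δ₀ := by
      refine le_trans (key μ hPμ hgμ) ?_
      have : (μ Uᶜ).toReal < δ₀ := by
        rw [← ENNReal.lt_ofReal_iff_toReal_lt (measure_ne_top _ _)] at *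
        exact hUc
      nlinarith [(ENNReal.toReal_nonneg : (0:ℝ) ≤ (μ Uᶜ).toReal)]
    have hMδ : (2 * M) * δ₀ ≤ ε / 4 := by
      have h1 : (2 * M) * δ₀ ≤ (2 * (M + 1)) * δ₀ := by nlinarith
      have h2 : (2 * (M + 1)) * δ₀ = ε / 8 := by
        rw [hδ₀def]; field_simp; ring
      linarith
    rw [dist_eq_norm]
    set A := ∫ x, g x ∂(μs n) with hA
    set B := ∫ x, h x ∂(μs n) with hB
    set Cc := ∫ x, h x ∂μ with hC
    set D := ∫ x, g x ∂μ with hD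
    have hsplit : A - D = (A - B) + (B - Cc) + (Cc - D) := by abel
    have h4 : ‖Cc - D‖ ≤ ε' + 2 * M * δ₀ := by rw [norm_sub_rev]; exact hb2
    have hnorm1 : ‖A - D‖ ≤ ‖A - B‖ + ‖B - Cc‖ + ‖Cc - D‖ := by
      rw [hsplit]
      refine le_trans (norm_add_le _ _) ?_
      exact add_le_add_left (norm_add_le _ _) _
    have hε'eq : ε' = ε / 8 := rfl
    linarith [hb1, hn3, h4, hMδ, hnorm1]
  exact eventually_atTop.1 hev2

/-- Tail integrals of a nonnegative integrable function can be made small. -/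
lemma tail_vanish {α : Type*} [MeasurableSpace α] (ν : Measure α) (u : α → ℝ)
    (hm : Measurable u) (h0 : ∀ x, 0 ≤ u x) (hint : Integrable u ν)
    (δ : ℝ) (hδ : 0 < δ) :
    ∃ C : ℝ, 0 ≤ C ∧ ∫ x in {x | C < u x}, u x ∂ν < δ := by
  have hmeas : ∀ k : ℕ, MeasurableSet {x | (k:ℝ) < u x} :=
    fun k => measurableSet_lt measurable_const hm
  have htend : Tendsto (fun k : ℕ => ∫ x, Set.indicator {x | (k:ℝ) < u x} u x ∂ν)
      atTop (𝓝 (∫ x, (0:ℝ) ∂ν)) := by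
    apply tendsto_integral_of_dominated_convergence u
      (fun k => (hm.indicator (hmeas k)).aestronglyMeasurable) hint
    · intro k
      filter_upwards with x
      rw [Real.norm_eq_abs]
      by_cases hx : x ∈ {x | (k:ℝ) < u x}
      · rw [Set.indicator_of_mem hx, abs_of_nonneg (h0 x)]
      · rw [Set.indicator_of_notMem hx]; simpa using h0 x
    · filter_upwards with x
      have hev : ∀ᶠ k : ℕ in atTop, Set.indicator {x | (k:ℝ) < u x} u x = 0 := by
        filter_upwards [(tendsto_natCast_atTop_atTop (R := ℝ)).eventually_gt_atTop (u x)]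
          with k hk
        exact Set.indicator_of_notMem (by simpa using hk.le) _
      exact Tendsto.congr' (hev.mono fun k hk => hk.symm) tendsto_const_nhds
  simp only [integral_zero] at htend
  have := (htend.eventually_lt_const hδ).exists
  rcases this with ⟨k, hk⟩
  refine ⟨k, Nat.cast_nonneg k, ?_⟩
  rwa [integral_indicator (hmeas k)] at hk

/-- Tail integrals are antitone in the cut level. -/
lemma tail_mono {α : Type*} [MeasurableSpace α] (ν : Measure α) (u : α → ℝ)
    (hm : Measurable u) (h0 : ∀ x, 0 ≤ u x) (hint : Integrable u ν)
    {C C' : ℝ} (hCC : C ≤ C') :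
    ∫ x in {x | C' < u x}, u x ∂ν ≤ ∫ x in {x | C < u x}, u x ∂ν := by
  apply setIntegral_mono_set hint.integrableOn
  · filter_upwards with x using h0 x
  · filter_upwards with x hx
    exact lt_of_le_of_lt hCC hx

/-- Convergence of posterior means: under Assumption A with `F` a separable Banach space, for a
fixed observation `y` with finite nonzero normalizing integrals, if the discontinuities of
`x ↦ ρ(x,y)` lie in a `μ_X`-null set, `‖·‖ ρ(·,y) ∈ L¹(μ_X)`, and for `k = 0,1` the families
`{‖x‖^k ρ(x,y) dμ_{X_n}}` are uniformly integrable, then weak convergence `μ_{X_n} → μ_X`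
implies norm convergence of the Bochner posterior means
`(∫ ρ(x,y) dμ_{X_n})⁻¹ • ∫ ρ(x,y) • x dμ_{X_n} → (∫ ρ(x,y) dμ_X)⁻¹ • ∫ ρ(x,y) • x dμ_X`. -/
theorem stmt13 {Ω F G : Type*} [mΩ : MeasurableSpace Ω]
    [NormedAddCommGroup F] [NormedSpace ℝ F] [CompleteSpace F] [SecondCountableTopology F]
    [MeasurableSpace F] [BorelSpace F]
    [TopologicalSpace G] [PolishSpace G] [MeasurableSpace G] [BorelSpace G]
    [AddCommGroup G] [IsTopologicalAddGroup G]
    (P : Measure Ω) [IsProbabilityMeasure P]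
    (X : Ω → F) (Xn : ℕ → Ω → F) (ε : Ω → G)
    (hX : Measurable X) (hXn : ∀ n, Measurable (Xn n)) (hε : Measurable ε)
    (hindX : IndepFun X ε P) (hindXn : ∀ n, IndepFun (Xn n) ε P)
    (L : F → G) (hL : Continuous L)
    (ν : Measure G) [SigmaFinite ν]
    (ρ : F → G → ℝ) (hρmeas : Measurable (Function.uncurry ρ)) (hρnn : ∀ x z, 0 ≤ ρ x z)
    (hdens : ∀ x, P.map (fun ω => ε ω + L x) =
      ν.withDensity (fun z => ENNReal.ofReal (ρ x z)))
    (y : G)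
    (hX0 : 0 < ∫ x, ρ x y ∂(P.map X)) (hXint : Integrable (fun x => ρ x y) (P.map X))
    (hXn0 : ∀ n, 0 < ∫ x, ρ x y ∂(P.map (Xn n)))
    (hXnint : ∀ n, Integrable (fun x => ρ x y) (P.map (Xn n)))
    (Nd : Set F) (hNd : P.map X Nd = 0)
    (hdisc : {x | ¬ ContinuousAt (fun x => ρ x y) x} ⊆ Nd)
    (hnorm : Integrable (fun x => ‖x‖ * ρ x y) (P.map X))
    (hnormn : ∀ n, Integrable (fun x => ‖x‖ * ρ x y) (P.map (Xn n)))
    (hui : ∀ k : ℕ, k ≤ 1 → ∀ δ : ℝ, 0 < δ → ∃ C : ℝ, ∀ n,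
      ∫ x in {x | C < ‖x‖ ^ k * ρ x y}, ‖x‖ ^ k * ρ x y ∂(P.map (Xn n)) < δ)
    (hweak : ∀ g : BoundedContinuousFunction F ℝ,
      Tendsto (fun n => ∫ x, g x ∂(P.map (Xn n))) atTop (𝓝 (∫ x, g x ∂(P.map X)))) :
    Tendsto (fun n =>
        (∫ x, ρ x y ∂(P.map (Xn n)))⁻¹ • ∫ x, ρ x y • x ∂(P.map (Xn n)))
      atTop
      (𝓝 ((∫ x, ρ x y ∂(P.map X))⁻¹ • ∫ x, ρ x y • x ∂(P.map X))) := by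
  classical
  have hPμ0 : IsProbabilityMeasure (P.map X) := Measure.isProbabilityMeasure_map hX.aemeasurable
  have hPμn : ∀ n, IsProbabilityMeasure (P.map (Xn n)) :=
    fun n => Measure.isProbabilityMeasure_map (hXn n).aemeasurable
  have hfm : Measurable (fun x => ρ x y) :=
    hρmeas.comp (measurable_id.prodMk measurable_const)
  have hf0 : ∀ x : F, 0 ≤ ρ x y := fun x => hρnn x y
  have hrm : Measurable (fun x : F => ‖x‖ * ρ x y) := measurable_norm.mul hfm
  have hr0 : ∀ x : F, 0 ≤ ‖x‖ * ρ x y := fun x => mul_nonneg (norm_nonneg x) (hf0 x)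
  obtain ⟨N, hNsub, hNmeas, hN0⟩ := exists_measurable_superset_of_null hNd
  have hcontf : ∀ x ∉ N, ContinuousAt (fun x => ρ x y) x := by
    intro x hx
    by_contra hc
    exact hx (hNsub (hdisc hc))
  -- simplified uniform integrability statements
  have hui0 : ∀ δ : ℝ, 0 < δ → ∃ C, ∀ n,
      ∫ x in {x | C < ρ x y}, ρ x y ∂(P.map (Xn n)) < δ := by
    intro δ hδ
    obtain ⟨C, hC⟩ := hui 0 (by norm_num) δ hδ
    exact ⟨C, fun n => by simpa using hC n⟩
  have hui1 : ∀ δ : ℝ, 0 < δ → ∃ C, ∀ n,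
      ∫ x in {x | C < ‖x‖ * ρ x y}, ‖x‖ * ρ x y ∂(P.map (Xn n)) < δ := by
    intro δ hδ
    obtain ⟨C, hC⟩ := hui 1 le_rfl δ hδ
    exact ⟨C, fun n => by simpa using hC n⟩
  -- Part 1 : convergence of normalizing constants
  have T1 : Tendsto (fun n => ∫ x, ρ x y ∂(P.map (Xn n))) atTop
      (𝓝 (∫ x, ρ x y ∂(P.map X))) := by
    rw [Metric.tendsto_atTop]
    intro δ hδ
    have hδ4 : 0 < δ / 4 := by linarith
    obtain ⟨C₀, hC₀⟩ := hui0 (δ/4) hδ4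
    obtain ⟨C₁, hC₁0, hC₁⟩ := tail_vanish (P.map X) (fun x => ρ x y) hfm hf0 hXint (δ/4) hδ4
    set C : ℝ := max C₀ C₁ with hCdef
    have hC0 : 0 ≤ C := le_trans hC₁0 (le_max_right _ _)
    set gC : F → ℝ := fun x => min (ρ x y) C with hgCdef
    have hgCm : Measurable gC := hfm.min measurable_const
    have hgC0 : ∀ x, 0 ≤ gC x := fun x => le_min (hf0 x) hC0
    have hgCb : ∀ x, ‖gC x‖ ≤ C := by
      intro x
      rw [Real.norm_eq_abs, abs_of_nonneg (hgC0 x)]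
      exact min_le_right _ _
    have hgCle : ∀ x, gC x ≤ ρ x y := fun x => min_le_left _ _
    -- the truncated integrals converge
    have TgC : Tendsto (fun n => ∫ x, gC x ∂(P.map (Xn n))) atTop
        (𝓝 (∫ x, gC x ∂(P.map X))) := by
      apply weak_tendsto_integral_of_ae_continuous (P.map X) hPμ0 _ hPμn gC
        (fun n => hgCm.aestronglyMeasurable) hgCm.aestronglyMeasurable C hgCb
        N hNmeas hN0 _ hweak
      intro x hx
      exact (hcontf x hx).min continuousAt_const
    -- truncation error
    have herr : ∀ (μ' : Measure F), IsProbabilityMeasure μ' →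
        Integrable (fun x => ρ x y) μ' →
        |(∫ x, ρ x y ∂μ') - ∫ x, gC x ∂μ'| ≤ ∫ x in {x | C < ρ x y}, ρ x y ∂μ' := by
      intro μ' hP' hint'
      haveI := hP'
      have hgCint : Integrable gC μ' := by
        apply hint'.mono hgCm.aestronglyMeasurable
        filter_upwards with x
        rw [Real.norm_eq_abs, abs_of_nonneg (hgC0 x), Real.norm_eq_abs,
          abs_of_nonneg (hf0 x)]
        exact hgCle x
      have hsetm : MeasurableSet {x : F | C < ρ x y} := measurableSet_lt measurable_const hfm
      have hnn : 0 ≤ (∫ x, ρ x y ∂μ') - ∫ x, gC x ∂μ' := by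
        rw [← integral_sub hint' hgCint]
        exact integral_nonneg fun x => by
          simp only [Pi.sub_apply]; exact sub_nonneg.2 (hgCle x)
      rw [abs_of_nonneg hnn, ← integral_sub hint' hgCint, ← integral_indicator hsetm]
      apply integral_mono (hint'.sub hgCint) (hint'.indicator hsetm)
      intro x
      simp only [Pi.sub_apply]
      by_cases hx : x ∈ {x : F | C < ρ x y}
      · rw [Set.indicator_of_mem hx]
        have : C ≤ ρ x y := le_of_lt hx
        simp only [hgCdef]
        rw [min_eq_right this]
        linarith
      · rw [Set.indicator_of_notMem hx]
        have : ρ x y ≤ C := le_of_not_gt hx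
        simp only [hgCdef]
        rw [min_eq_left this]
        simp
    obtain ⟨n₀, hn₀⟩ := Metric.tendsto_atTop.1 TgC (δ/4) hδ4
    refine ⟨n₀, fun n hn => ?_⟩
    have h1 : |(∫ x, ρ x y ∂(P.map (Xn n))) - ∫ x, gC x ∂(P.map (Xn n))| < δ/4 := by
      refine lt_of_le_of_lt (herr _ (hPμn n) (hXnint n)) ?_
      refine lt_of_le_of_lt (tail_mono _ _ hfm hf0 (hXnint n) (le_max_left C₀ C₁)) (hC₀ n)
    have h2 : |(∫ x, ρ x y ∂(P.map X)) - ∫ x, gC x ∂(P.map X)| < δ/4 := by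
      refine lt_of_le_of_lt (herr _ hPμ0 hXint) ?_
      refine lt_of_le_of_lt (tail_mono _ _ hfm hf0 hXint (le_max_right C₀ C₁)) hC₁
    have h3 := hn₀ n hn
    rw [Real.dist_eq] at h3 ⊢
    calc |(∫ x, ρ x y ∂(P.map (Xn n))) - ∫ x, ρ x y ∂(P.map X)|
        ≤ |(∫ x, ρ x y ∂(P.map (Xn n))) - ∫ x, gC x ∂(P.map (Xn n))| +
          |(∫ x, gC x ∂(P.map (Xn n))) - ∫ x, gC x ∂(P.map X)| +
          |(∫ x, gC x ∂(P.map X)) - ∫ x, ρ x y ∂(P.map X)| := by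
          have := abs_sub_le ((∫ x, ρ x y ∂(P.map (Xn n)))) (∫ x, gC x ∂(P.map (Xn n)))
            (∫ x, ρ x y ∂(P.map X))
          have h5 := abs_sub_le ((∫ x, gC x ∂(P.map (Xn n)))) (∫ x, gC x ∂(P.map X))
            (∫ x, ρ x y ∂(P.map X))
          linarith
      _ < δ/4 + δ/4 + δ/4 := by
          rw [abs_sub_comm] at h2
          exact add_lt_add (add_lt_add h1 h3) h2
      _ < δ := by linarith
  -- Part 2 : convergence of the unnormalized means
  have T2 : Tendsto (fun n => ∫ x, ρ x y • x ∂(P.map (Xn n))) atTop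
      (𝓝 (∫ x, ρ x y • x ∂(P.map X))) := by
    rw [Metric.tendsto_atTop]
    intro δ hδ
    have hδ4 : 0 < δ / 4 := by linarith
    obtain ⟨C₀, hC₀⟩ := hui1 (δ/4) hδ4
    obtain ⟨C₁, hC₁0, hC₁⟩ := tail_vanish (P.map X) (fun x => ‖x‖ * ρ x y) hrm hr0 hnorm
      (δ/4) hδ4
    set C : ℝ := max (max C₀ C₁) 1 with hCdef
    have hC1 : (1:ℝ) ≤ C := le_max_right _ _
    have hCpos : 0 < C := lt_of_lt_of_le one_pos hC1
    set gC : F → F := fun x => (C / max (‖x‖ * ρ x y) C) • (ρ x y • x) with hgCdef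
    have hmaxpos : ∀ x : F, 0 < max (‖x‖ * ρ x y) C := fun x => lt_of_lt_of_le hCpos (le_max_right _ _)
    have hgCm : Measurable gC :=
      (measurable_const.div (hrm.max measurable_const)).smul (hfm.smul measurable_id)
    have hnormfx : ∀ x : F, ‖ρ x y • x‖ = ‖x‖ * ρ x y := by
      intro x
      rw [norm_smul, Real.norm_eq_abs, abs_of_nonneg (hf0 x), mul_comm]
    have hgCb : ∀ x, ‖gC x‖ ≤ C := by
      intro x
      simp only [hgCdef]
      rw [norm_smul, Real.norm_eq_abs, abs_of_nonneg (div_nonneg hCpos.le (hmaxpos x).le),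
        hnormfx]
      calc C / max (‖x‖ * ρ x y) C * (‖x‖ * ρ x y)
          ≤ C / max (‖x‖ * ρ x y) C * max (‖x‖ * ρ x y) C := by
            apply mul_le_mul_of_nonneg_left (le_max_left _ _)
            exact div_nonneg hCpos.le (hmaxpos x).le
        _ = C := div_mul_cancel₀ C (hmaxpos x).ne'
    -- truncated integrals converge
    have TgC : Tendsto (fun n => ∫ x, gC x ∂(P.map (Xn n))) atTop
        (𝓝 (∫ x, gC x ∂(P.map X))) := by
      apply weak_tendsto_integral_of_ae_continuous (P.map X) hPμ0 _ hPμn gC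
        (fun n => hgCm.aestronglyMeasurable) hgCm.aestronglyMeasurable C hgCb
        N hNmeas hN0 _ hweak
      intro x hx
      have hrc : ContinuousAt (fun x : F => ‖x‖ * ρ x y) x :=
        (continuous_norm.continuousAt).mul (hcontf x hx)
      exact (continuousAt_const.div (hrc.max continuousAt_const) (hmaxpos x).ne').smul
        ((hcontf x hx).smul continuousAt_id)
    -- pointwise truncation error
    have hpw : ∀ x : F, ‖ρ x y • x - gC x‖ ≤
        Set.indicator {x : F | C < ‖x‖ * ρ x y} (fun x => ‖x‖ * ρ x y) x := by
      intro x
      by_cases hx : ‖x‖ * ρ x y ≤ C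
      · have : max (‖x‖ * ρ x y) C = C := max_eq_right hx
        simp only [hgCdef, this, div_self hCpos.ne', one_smul, sub_self, norm_zero]
        exact Set.indicator_nonneg (fun x _ => hr0 x) x
      · push_neg at hx
        have hmax : max (‖x‖ * ρ x y) C = ‖x‖ * ρ x y := max_eq_left hx.le
        have hrpos : 0 < ‖x‖ * ρ x y := lt_trans hCpos hx
        have hmem : x ∈ {x : F | C < ‖x‖ * ρ x y} := hx
        rw [Set.indicator_of_mem hmem]
        simp only [hgCdef, hmax]
        have heq : ρ x y • x - (C / (‖x‖ * ρ x y)) • (ρ x y • x)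
            = (1 - C / (‖x‖ * ρ x y)) • (ρ x y • x) := by
          rw [sub_smul, one_smul]
        rw [heq, norm_smul, Real.norm_eq_abs, hnormfx]
        have hfrac : 0 ≤ 1 - C / (‖x‖ * ρ x y) := by
          rw [sub_nonneg, div_le_one hrpos]
          exact hx.le
        rw [abs_of_nonneg hfrac]
        have : (1 - C / (‖x‖ * ρ x y)) * (‖x‖ * ρ x y) = ‖x‖ * ρ x y - C := by
          rw [sub_mul, one_mul, div_mul_cancel₀ C hrpos.ne']
        rw [this]
        linarith
    -- integral truncation error
    have herr : ∀ (μ' : Measure F), IsProbabilityMeasure μ' →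
        Integrable (fun x => ‖x‖ * ρ x y) μ' →
        ‖(∫ x, ρ x y • x ∂μ') - ∫ x, gC x ∂μ'‖ ≤
          ∫ x in {x : F | C < ‖x‖ * ρ x y}, ‖x‖ * ρ x y ∂μ' := by
      intro μ' hP' hrint
      haveI := hP'
      have hsm : Measurable (fun x : F => ρ x y • x) := hfm.smul measurable_id
      have hfxint : Integrable (fun x => ρ x y • x) μ' := by
        apply hrint.mono hsm.aestronglyMeasurable
        filter_upwards with x
        rw [hnormfx, Real.norm_eq_abs, abs_of_nonneg (hr0 x)]
      have hgCint : Integrable gC μ' :=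
        (integrable_const C).mono' hgCm.aestronglyMeasurable
          (Eventually.of_forall hgCb)
      have hsetm : MeasurableSet {x : F | C < ‖x‖ * ρ x y} :=
        measurableSet_lt measurable_const hrm
      rw [← integral_sub hfxint hgCint, ← integral_indicator hsetm]
      refine le_trans (norm_integral_le_integral_norm _) ?_
      apply integral_mono ((hfxint.sub hgCint).norm) (hrint.indicator hsetm)
      intro x
      simp only [Pi.sub_apply]
      exact hpw x
    obtain ⟨n₀, hn₀⟩ := Metric.tendsto_atTop.1 TgC (δ/4) hδ4
    refine ⟨n₀, fun n hn => ?_⟩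
    have h1 : ‖(∫ x, ρ x y • x ∂(P.map (Xn n))) - ∫ x, gC x ∂(P.map (Xn n))‖ < δ/4 := by
      refine lt_of_le_of_lt (herr _ (hPμn n) (hnormn n)) ?_
      refine lt_of_le_of_lt (tail_mono _ _ hrm hr0 (hnormn n)
        (le_trans (le_max_left C₀ C₁) (le_max_left _ 1))) (hC₀ n)
    have h2 : ‖(∫ x, ρ x y • x ∂(P.map X)) - ∫ x, gC x ∂(P.map X)‖ < δ/4 := by
      refine lt_of_le_of_lt (herr _ hPμ0 hnorm) ?_
      refine lt_of_le_of_lt (tail_mono _ _ hrm hr0 hnorm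
        (le_trans (le_max_right C₀ C₁) (le_max_left _ 1))) hC₁
    have h3 := hn₀ n hn
    rw [dist_eq_norm] at h3 ⊢
    set A := ∫ x, ρ x y • x ∂(P.map (Xn n))
    set B := ∫ x, gC x ∂(P.map (Xn n))
    set Cc := ∫ x, gC x ∂(P.map X)
    set D := ∫ x, ρ x y • x ∂(P.map X)
    have hsplit : A - D = (A - B) + (B - Cc) + (Cc - D) := by abel
    have h2' : ‖Cc - D‖ < δ/4 := by rw [norm_sub_rev]; exact h2
    calc ‖A - D‖ ≤ ‖A - B‖ + ‖B - Cc‖ + ‖Cc - D‖ := by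
          rw [hsplit]
          refine le_trans (norm_add_le _ _) ?_
          exact add_le_add_left (norm_add_le _ _) _
      _ < δ/4 + δ/4 + δ/4 := add_lt_add (add_lt_add h1 h3) h2'
      _ < δ := by linarith
  exact Tendsto.smul (T1.inv₀ (ne_of_gt hX0)) T2
end

section
/- (Setwise/variation convergence of posteriors) Under Assumption A, fix y with finite nonzero normalizing integrals. Suppose the measures U ↦ ∫_U ρ(x,y) dμ_{X_n}(x) are uniformly bounded and equicontinuous at zero (for every decreasing sequence of Borel sets U_i ↓ ∅, lim_i sup_n ∫_{U_i} ρ(x,y) dμ_{X_n}(x) = 0). Then if μ_{X_n} converges setwise (respectively in total variation) to μ_X, the posterior distributions μ_n(·,y) converge setwise (respectively in total variation) to μ(·,y). -/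
open MeasureTheory ProbabilityTheory Filter Topology
open scoped ENNReal

private lemma ratio_bound {a b a' b' e : ℝ} (hb : 0 < b) (ha : 0 ≤ a) (hab : a ≤ b)
    (he : e ≤ b / 2) (hb' : |b' - b| ≤ e) (ha' : |a' - a| ≤ e) :
    |a' / b' - a / b| ≤ 4 * e / b := by
  have he0 : 0 ≤ e := le_trans (abs_nonneg _) ha'
  have hb'1 : b / 2 ≤ b' := by
    rcases abs_le.1 hb' with ⟨h1, h2⟩; linarith
  have hb'0 : 0 < b' := lt_of_lt_of_le (by linarith) hb'1
  have key : a' / b' - a / b = ((a' - a) * b + a * (b - b')) / (b' * b) := by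
    field_simp; ring
  rw [key, abs_div, abs_of_pos (mul_pos hb'0 hb)]
  have h1 : |(a' - a) * b + a * (b - b')| ≤ e * b + b * e := by
    calc |(a' - a) * b + a * (b - b')| ≤ |(a' - a) * b| + |a * (b - b')| := abs_add_le _ _
    _ ≤ e * b + b * e := by
        rw [abs_mul, abs_mul, abs_of_pos hb, abs_of_nonneg ha]
        refine add_le_add (mul_le_mul_of_nonneg_right ha' hb.le)
          (mul_le_mul hab ?_ (abs_nonneg _) hb.le)
        rw [abs_sub_comm]; exact hb'
  calc |(a' - a) * b + a * (b - b')| / (b' * b) ≤ (e * b + b * e) / ((b / 2) * b) := by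
        apply div_le_div₀ (by positivity) h1 (by positivity)
        exact mul_le_mul_of_nonneg_right hb'1 hb.le
  _ = 4 * e / b := by field_simp; ring

private lemma core_one {F : Type*} [MeasurableSpace F]
    (μ μ' : Measure F) [IsProbabilityMeasure μ] [IsProbabilityMeasure μ']
    (g : F → ℝ) (hg : Measurable g) (hgnn : ∀ x, 0 ≤ g x)
    (hint : Integrable g μ) (hint' : Integrable g μ')
    (K η : ℝ) (hη : 0 < η) (m : ℕ) (hm : K ≤ m * η)
    (U : Set F) (hU : MeasurableSet U)
    {δ₁ Δ : ℝ} (hΔ0 : 0 ≤ Δ)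
    (ht' : ∫ x in {x | K ≤ g x}, g x ∂μ' ≤ δ₁)
    (hΔ : ∀ j < m, (μ' (U ∩ {x | (j : ℝ) * η ≤ g x ∧ g x < ((j : ℝ) + 1) * η})).toReal
        ≤ (μ (U ∩ {x | (j : ℝ) * η ≤ g x ∧ g x < ((j : ℝ) + 1) * η})).toReal + Δ) :
    (∫ x in U, g x ∂μ') ≤ (∫ x in U, g x ∂μ) + (δ₁ + η + m * (m * η) * Δ) := by
  set S : ℕ → Set F := fun j => {x | (j : ℝ) * η ≤ g x ∧ g x < ((j : ℝ) + 1) * η} with hSdef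
  have hSm : ∀ j, MeasurableSet (S j) := fun j =>
    (measurableSet_le measurable_const hg).inter (measurableSet_lt hg measurable_const)
  set A : ℕ → Set F := fun j => U ∩ S j with hAdef
  have hAm : ∀ j, MeasurableSet (A j) := fun j => hU.inter (hSm j)
  set W : Set F := ⋃ j ∈ Finset.range m, A j with hWdef
  have hWm : MeasurableSet W := (Finset.range m).measurableSet_biUnion (fun j _ => hAm j)
  have hWU : W ⊆ U := Set.iUnion₂_subset fun j _ => Set.inter_subset_left
  have hUW : U ∩ W = W := Set.inter_eq_self_of_subset_right hWU
  have hdisjS : ∀ i j : ℕ, i < j → ∀ x, x ∈ S i → x ∈ S j → False := by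
    intro i j hij x hxi hxj
    have h1 : ((i : ℝ) + 1) * η ≤ (j : ℝ) * η := by
      have : ((i : ℝ) + 1) ≤ (j : ℝ) := by exact_mod_cast hij
      exact mul_le_mul_of_nonneg_right this hη.le
    exact absurd (lt_of_lt_of_le hxi.2 (h1.trans hxj.1)) (lt_irrefl _)
  have hdisj : Set.Pairwise ↑(Finset.range m) (Function.onFun Disjoint A) := by
    intro i _ j _ hij
    refine Set.disjoint_left.2 fun x hxi hxj => ?_
    rcases lt_or_gt_of_ne hij with h | h
    · exact hdisjS i j h x hxi.2 hxj.2
    · exact hdisjS j i h x hxj.2 hxi.2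
  -- points of U outside W have g ≥ K
  have hcompl : U \ W ⊆ {x | K ≤ g x} := by
    intro x hx
    by_contra hK
    simp only [Set.mem_setOf_eq, not_le] at hK
    set j : ℕ := ⌊g x / η⌋₊ with hjdef
    have hjle : (j : ℝ) * η ≤ g x := by
      rw [← le_div_iff₀ hη]
      exact Nat.floor_le (div_nonneg (hgnn x) hη.le)
    have hjlt : g x < ((j : ℝ) + 1) * η := by
      rw [← div_lt_iff₀ hη]
      exact Nat.lt_floor_add_one _
    have hjm : j < m := by
      by_contra hjm
      push_neg at hjm
      have : (m : ℝ) * η ≤ (j : ℝ) * η :=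
        mul_le_mul_of_nonneg_right (by exact_mod_cast hjm) hη.le
      linarith
    exact hx.2 (Set.mem_biUnion (Finset.mem_range.2 hjm) ⟨hx.1, hjle, hjlt⟩)
  -- splitting
  have hsplit : ∀ (μ0 : Measure F), Integrable g μ0 →
      (∫ x in U, g x ∂μ0) = (∫ x in W, g x ∂μ0) + ∫ x in U \ W, g x ∂μ0 := by
    intro μ0 h0
    rw [← integral_inter_add_diff hWm h0.integrableOn, hUW]
  -- tail bound for μ'
  have htail' : ∫ x in U \ W, g x ∂μ' ≤ δ₁ := by
    refine le_trans ?_ ht'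
    exact setIntegral_mono_set hint'.integrableOn
      (Filter.Eventually.of_forall fun x => hgnn x)
      (HasSubset.Subset.eventuallyLE hcompl)
  have htailnn : (0:ℝ) ≤ ∫ x in U \ W, g x ∂μ :=
    setIntegral_nonneg (hU.diff hWm) fun x _ => hgnn x
  -- sums
  have hsum : ∀ (μ0 : Measure F), Integrable g μ0 →
      (∫ x in W, g x ∂μ0) = ∑ j ∈ Finset.range m, ∫ x in A j, g x ∂μ0 := by
    intro μ0 h0
    exact integral_biUnion_finset (Finset.range m) (fun j _ => hAm j) hdisj
      (fun j _ => h0.integrableOn)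
  -- per-slice bounds
  have hup : ∀ j ∈ Finset.range m,
      (∫ x in A j, g x ∂μ') ≤ ((j : ℝ) + 1) * η * (μ' (A j)).toReal := by
    intro j _
    have h1 : (∫ x in A j, g x ∂μ') ≤ ∫ x in A j, ((j : ℝ) + 1) * η ∂μ' :=
      setIntegral_mono_on hint'.integrableOn (integrableOn_const (measure_ne_top _ _))
        (hAm j) (fun x hx => hx.2.2.le)
    rwa [setIntegral_const, smul_eq_mul, mul_comm] at h1
  have hlo : ∀ j ∈ Finset.range m,
      (j : ℝ) * η * (μ (A j)).toReal ≤ ∫ x in A j, g x ∂μ := by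
    intro j _
    have h1 : (∫ x in A j, (j : ℝ) * η ∂μ) ≤ ∫ x in A j, g x ∂μ :=
      setIntegral_mono_on (integrableOn_const (measure_ne_top _ _))
        hint.integrableOn (hAm j) (fun x hx => hx.2.1)
    rwa [setIntegral_const, smul_eq_mul, mul_comm] at h1
  -- mass bound
  have hmass : ∑ j ∈ Finset.range m, (μ' (A j)).toReal ≤ 1 := by
    have h1 : ∑ j ∈ Finset.range m, (μ' (A j)).toReal
        = (μ' W).toReal := by
      rw [hWdef, measure_biUnion_finset hdisj (fun j _ => hAm j),
        ENNReal.toReal_sum (fun j _ => measure_ne_top _ _)]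
    rw [h1]
    have := prob_le_one (μ := μ') (s := W)
    exact ENNReal.toReal_le_of_le_ofReal zero_le_one (by simpa using this)
  -- termwise estimate
  have hterm : ∀ j ∈ Finset.range m,
      ((j : ℝ) + 1) * η * (μ' (A j)).toReal
        ≤ (j : ℝ) * η * (μ (A j)).toReal + m * η * Δ + η * (μ' (A j)).toReal := by
    intro j hj
    have hjm : j < m := Finset.mem_range.1 hj
    have hjm' : (j : ℝ) ≤ m := by exact_mod_cast hjm.le
    have hΔj := hΔ j hjm
    have hp'nn : (0:ℝ) ≤ (μ' (A j)).toReal := ENNReal.toReal_nonneg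
    have hjη : (0:ℝ) ≤ (j : ℝ) * η := mul_nonneg (Nat.cast_nonneg j) hη.le
    nlinarith [mul_le_mul_of_nonneg_left hΔj hjη, mul_le_mul_of_nonneg_right hjm' hη.le,
      mul_le_mul_of_nonneg_right (mul_le_mul_of_nonneg_right hjm' hη.le) hΔ0]
  -- assemble
  have h1 : (∫ x in U, g x ∂μ')
      ≤ ∑ j ∈ Finset.range m, (((j : ℝ) + 1) * η * (μ' (A j)).toReal) + δ₁ := by
    rw [hsplit μ' hint', hsum μ' hint']
    exact add_le_add (Finset.sum_le_sum hup) htail'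
  have h2 : ∑ j ∈ Finset.range m, ((j : ℝ) * η * (μ (A j)).toReal)
      ≤ ∫ x in U, g x ∂μ := by
    rw [hsplit μ hint, hsum μ hint]
    have := Finset.sum_le_sum hlo
    linarith
  have h3 : ∑ j ∈ Finset.range m, (((j : ℝ) + 1) * η * (μ' (A j)).toReal)
      ≤ ∑ j ∈ Finset.range m, ((j : ℝ) * η * (μ (A j)).toReal) + m * (m * η) * Δ + η := by
    have hs := Finset.sum_le_sum hterm
    rw [Finset.sum_add_distrib, Finset.sum_add_distrib, Finset.sum_const,
      Finset.card_range, ← Finset.mul_sum] at hs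
    have hη1 : η * ∑ j ∈ Finset.range m, (μ' (A j)).toReal ≤ η * 1 :=
      mul_le_mul_of_nonneg_left hmass hη.le
    rw [nsmul_eq_mul] at hs
    have hrw : (m : ℝ) * ((m : ℝ) * η * Δ) = (m : ℝ) * ((m : ℝ) * η) * Δ := by ring
    rw [hrw] at hs
    linarith
  linarith

private lemma tail_tendsto {F : Type*} [MeasurableSpace F] (μ : Measure F)
    (g : F → ℝ) (hg : Measurable g) (hgnn : ∀ x, 0 ≤ g x) (hint : Integrable g μ) :
    Tendsto (fun i : ℕ => ∫ x in {x | (i : ℝ) ≤ g x}, g x ∂μ) atTop (𝓝 0) := by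
  have hmeas : ∀ i : ℕ, MeasurableSet {x | (i : ℝ) ≤ g x} := fun i =>
    measurableSet_le measurable_const hg
  have h := tendsto_integral_of_dominated_convergence (F := fun i : ℕ =>
      ({x | (i : ℝ) ≤ g x}).indicator g) (f := fun _ => (0:ℝ)) (bound := g)
    (fun i => (hg.indicator (hmeas i)).aestronglyMeasurable)
    hint
    (fun i => Filter.Eventually.of_forall fun x => by
      show ‖({x | (i : ℝ) ≤ g x}).indicator g x‖ ≤ g x
      by_cases hx : x ∈ {x | (i : ℝ) ≤ g x}
      · rw [Set.indicator_of_mem hx, Real.norm_eq_abs, abs_of_nonneg (hgnn x)]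
      · rw [Set.indicator_of_notMem hx]; simpa using hgnn x)
    (Filter.Eventually.of_forall fun x => by
      obtain ⟨i0, hi0⟩ := exists_nat_gt (g x)
      refine tendsto_const_nhds.congr' ?_
      filter_upwards [Filter.eventually_ge_atTop i0] with i hi
      have : x ∉ {x | (i : ℝ) ≤ g x} := by
        simp only [Set.mem_setOf_eq, not_le]
        exact lt_of_lt_of_le hi0 (by exact_mod_cast hi)
      rw [Set.indicator_of_notMem this])
  simpa [integral_indicator (hmeas _)] using h

private lemma claim {F : Type*} [MeasurableSpace F] (μ : Measure F) (μn : ℕ → Measure F)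
    [IsProbabilityMeasure μ] [∀ n, IsProbabilityMeasure (μn n)]
    (g : F → ℝ) (hg : Measurable g) (hgnn : ∀ x, 0 ≤ g x)
    (hint : Integrable g μ) (hintn : ∀ n, Integrable g (μn n))
    (hequi : ∀ U : ℕ → Set F, (∀ i, MeasurableSet (U i)) → Antitone U →
      (⋂ i, U i) = ∅ → ∀ δ : ℝ, 0 < δ → ∃ i0, ∀ i ≥ i0, ∀ n,
        ∫ x in U i, g x ∂(μn n) < δ)
    {δ : ℝ} (hδ : 0 < δ) :
    ∃ (m : ℕ) (η Δ : ℝ), 0 < η ∧ 0 < Δ ∧ ∀ (n : ℕ) (U : Set F), MeasurableSet U →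
      (∀ j < m, |(μn n (U ∩ {x | (j : ℝ) * η ≤ g x ∧ g x < ((j : ℝ) + 1) * η})).toReal
          - (μ (U ∩ {x | (j : ℝ) * η ≤ g x ∧ g x < ((j : ℝ) + 1) * η})).toReal| ≤ Δ) →
      |(∫ x in U, g x ∂(μn n)) - ∫ x in U, g x ∂μ| < δ := by
  set V : ℕ → Set F := fun i => {x | (i : ℝ) ≤ g x} with hVdef
  have hVmeas : ∀ i, MeasurableSet (V i) := fun i => measurableSet_le measurable_const hg
  have hVanti : Antitone V := by
    intro i j hij x hx
    have h1 : (i : ℝ) ≤ (j : ℝ) := by exact_mod_cast hij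
    exact le_trans h1 hx
  have hVempty : (⋂ i, V i) = ∅ := by
    rw [Set.eq_empty_iff_forall_notMem]
    intro x hx
    obtain ⟨i, hi⟩ := exists_nat_gt (g x)
    exact absurd (Set.mem_iInter.1 hx i) (not_le.2 hi)
  obtain ⟨i0, hi0⟩ := hequi V hVmeas hVanti hVempty (δ / 4) (by linarith)
  obtain ⟨i1, hi1⟩ := Metric.tendsto_atTop.1 (tail_tendsto μ g hg hgnn hint) (δ / 4)
    (by linarith)
  set K : ℕ := max i0 i1 with hKdef
  have htailμ : ∫ x in V K, g x ∂μ ≤ δ / 4 := by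
    have := hi1 K (le_max_right _ _)
    rw [Real.dist_eq, sub_zero] at this
    exact le_of_lt (lt_of_abs_lt this)
  have htailμn : ∀ n, ∫ x in V K, g x ∂(μn n) ≤ δ / 4 := fun n =>
    (hi0 K (le_max_left _ _) n).le
  set η : ℝ := δ / 4 with hηdef
  have hη : 0 < η := by rw [hηdef]; linarith
  set m : ℕ := ⌈(K : ℝ) / η⌉₊ + 1 with hmdef
  have hm : (K : ℝ) ≤ m * η := by
    have h1 : (K : ℝ) / η ≤ m := le_trans (Nat.le_ceil _) (by exact_mod_cast Nat.le_succ _)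
    rwa [div_le_iff₀ hη] at h1
  set a : ℝ := (m : ℝ) * ((m : ℝ) * η) with hadef
  have ha0 : 0 ≤ a := by positivity
  set Δ : ℝ := δ / (4 * (a + 1)) with hΔdef
  have ha1 : (0:ℝ) < a + 1 := by linarith
  have hΔpos : 0 < Δ := by rw [hΔdef]; positivity
  have haΔ : a * Δ < δ / 4 := by
    have heq : a * Δ = δ / 4 * (a / (a + 1)) := by
      rw [hΔdef]; field_simp
    have hlt : a / (a + 1) < 1 := (div_lt_one ha1).2 (by linarith)
    calc a * Δ = δ / 4 * (a / (a + 1)) := heq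
    _ < δ / 4 * 1 := by
        apply mul_lt_mul_of_pos_left hlt (by linarith)
    _ = δ / 4 := mul_one _
  refine ⟨m, η, Δ, hη, hΔpos, fun n U hU hslices => ?_⟩
  have hb1 : (∫ x in U, g x ∂(μn n)) ≤ (∫ x in U, g x ∂μ) + (δ / 4 + η + m * (m * η) * Δ) :=
    core_one μ (μn n) g hg hgnn hint (hintn n) (K : ℝ) η hη m hm U hU hΔpos.le (htailμn n)
      (fun j hj => by
        have h := abs_sub_le_iff.1 (hslices j hj)
        linarith [h.1])
  have hb2 : (∫ x in U, g x ∂μ) ≤ (∫ x in U, g x ∂(μn n)) + (δ / 4 + η + m * (m * η) * Δ) :=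
    core_one (μn n) μ g hg hgnn (hintn n) hint (K : ℝ) η hη m hm U hU hΔpos.le htailμ
      (fun j hj => by
        have h := abs_sub_le_iff.1 (hslices j hj)
        linarith [h.2])
  have habs : |(∫ x in U, g x ∂(μn n)) - ∫ x in U, g x ∂μ| ≤ δ / 4 + η + m * (m * η) * Δ :=
    abs_sub_le_iff.2 ⟨by linarith, by linarith⟩
  have : (m : ℝ) * ((m : ℝ) * η) * Δ < δ / 4 := haΔ
  calc |(∫ x in U, g x ∂(μn n)) - ∫ x in U, g x ∂μ| ≤ δ / 4 + η + m * (m * η) * Δ := habs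
  _ < δ := by rw [hηdef] at *; linarith

/-- Setwise / total-variation posterior convergence: under Assumption A, for a fixed observation
`y` with finite nonzero normalizing integrals, if the measures `U ↦ ∫_U ρ(x,y) dμ_{X_n}` are
uniformly bounded and equicontinuous at zero, then setwise (resp. uniform, i.e. in variation)
convergence of the priors `μ_{X_n} → μ_X` implies setwise (resp. in variation) convergence of
the posterior distributions `μ_n(·,y) → μ(·,y)`. -/
theorem stmt14 {Ω F G : Type*} [mΩ : MeasurableSpace Ω]
    [TopologicalSpace F] [PolishSpace F] [MeasurableSpace F] [BorelSpace F]
    [TopologicalSpace G] [PolishSpace G] [MeasurableSpace G] [BorelSpace G]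
    [AddCommGroup G] [IsTopologicalAddGroup G]
    (P : Measure Ω) [IsProbabilityMeasure P]
    (X : Ω → F) (Xn : ℕ → Ω → F) (ε : Ω → G)
    (hX : Measurable X) (hXn : ∀ n, Measurable (Xn n)) (hε : Measurable ε)
    (hindX : IndepFun X ε P) (hindXn : ∀ n, IndepFun (Xn n) ε P)
    (L : F → G) (hL : Continuous L)
    (ν : Measure G) [SigmaFinite ν]
    (ρ : F → G → ℝ) (hρmeas : Measurable (Function.uncurry ρ)) (hρnn : ∀ x z, 0 ≤ ρ x z)
    (hdens : ∀ x, P.map (fun ω => ε ω + L x) =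
      ν.withDensity (fun z => ENNReal.ofReal (ρ x z)))
    (y : G)
    (hX0 : 0 < ∫ x, ρ x y ∂(P.map X)) (hXint : Integrable (fun x => ρ x y) (P.map X))
    (hXn0 : ∀ n, 0 < ∫ x, ρ x y ∂(P.map (Xn n)))
    (hXnint : ∀ n, Integrable (fun x => ρ x y) (P.map (Xn n)))
    (hbdd : ∃ M : ℝ, ∀ n, ∫ x, ρ x y ∂(P.map (Xn n)) ≤ M)
    (hequi : ∀ U : ℕ → Set F, (∀ i, MeasurableSet (U i)) → Antitone U →
      (⋂ i, U i) = ∅ → ∀ δ : ℝ, 0 < δ → ∃ i0, ∀ i ≥ i0, ∀ n,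
        ∫ x in U i, ρ x y ∂(P.map (Xn n)) < δ) :
    ((∀ U : Set F, MeasurableSet U →
        Tendsto (fun n => P.map (Xn n) U) atTop (𝓝 (P.map X U))) →
      ∀ U : Set F, MeasurableSet U →
        Tendsto (fun n =>
            (∫ x in U, ρ x y ∂(P.map (Xn n))) / ∫ x, ρ x y ∂(P.map (Xn n)))
          atTop
          (𝓝 ((∫ x in U, ρ x y ∂(P.map X)) / ∫ x, ρ x y ∂(P.map X)))) ∧
    ((∀ δ : ℝ, 0 < δ → ∃ N, ∀ n ≥ N, ∀ U : Set F, MeasurableSet U →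
        |(P.map (Xn n) U).toReal - (P.map X U).toReal| < δ) →
      ∀ δ : ℝ, 0 < δ → ∃ N, ∀ n ≥ N, ∀ U : Set F, MeasurableSet U →
        |(∫ x in U, ρ x y ∂(P.map (Xn n))) / (∫ x, ρ x y ∂(P.map (Xn n))) -
          (∫ x in U, ρ x y ∂(P.map X)) / (∫ x, ρ x y ∂(P.map X))| < δ) := by
  haveI : IsProbabilityMeasure (P.map X) := Measure.isProbabilityMeasure_map hX.aemeasurable
  haveI hPI : ∀ n, IsProbabilityMeasure (P.map (Xn n)) := fun n =>
    Measure.isProbabilityMeasure_map (hXn n).aemeasurable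
  have hg : Measurable (fun x => ρ x y) :=
    hρmeas.comp (measurable_id.prodMk measurable_const)
  have hgnn : ∀ x, 0 ≤ (fun x => ρ x y) x := fun x => hρnn x y
  have hSmeas : ∀ (V : Set F), MeasurableSet V → ∀ (j : ℕ) (η : ℝ),
      MeasurableSet (V ∩ {x | (j : ℝ) * η ≤ ρ x y ∧ ρ x y < ((j : ℝ) + 1) * η}) :=
    fun V hV j η => hV.inter
      ((measurableSet_le measurable_const hg).inter (measurableSet_lt hg measurable_const))
  constructor
  · -- setwise part
    intro hsetwise U hU
    have hconv : ∀ V : Set F, MeasurableSet V →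
        Tendsto (fun n => ∫ x in V, ρ x y ∂(P.map (Xn n))) atTop
          (𝓝 (∫ x in V, ρ x y ∂(P.map X))) := by
      intro V hV
      refine Metric.tendsto_nhds.2 fun δ hδ => ?_
      obtain ⟨m, η, Δ, hη, hΔ, hmain⟩ := claim (P.map X) (fun n => P.map (Xn n))
        (fun x => ρ x y) hg hgnn hXint hXnint hequi hδ
      have hev : ∀ᶠ n in atTop, ∀ j ∈ Finset.range m,
          |((P.map (Xn n)) (V ∩ {x | (j : ℝ) * η ≤ ρ x y ∧ ρ x y < ((j : ℝ) + 1) * η})).toReal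
            - ((P.map X) (V ∩ {x | (j : ℝ) * η ≤ ρ x y ∧ ρ x y < ((j : ℝ) + 1) * η})).toReal|
            ≤ Δ := by
        rw [eventually_all_finset]
        intro j _
        have h1 := hsetwise _ (hSmeas V hV j η)
        have h2 := (ENNReal.tendsto_toReal (measure_ne_top (P.map X) _)).comp h1
        have h3 := Metric.tendsto_nhds.1 h2 Δ hΔ
        filter_upwards [h3] with n hn
        rw [Function.comp_apply, Real.dist_eq] at hn
        exact hn.le
      filter_upwards [hev] with n hn
      rw [Real.dist_eq]
      exact hmain n V hV (fun j hj => hn j (Finset.mem_range.2 hj))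
    have hden : (∫ x in Set.univ, ρ x y ∂(P.map X)) ≠ 0 := by
      rw [setIntegral_univ]; exact ne_of_gt hX0
    have hdiv := (hconv U hU).div (hconv Set.univ MeasurableSet.univ) hden
    simp only [setIntegral_univ] at hdiv
    exact hdiv
  · -- total variation part
    intro H δ hδ
    set b : ℝ := ∫ x, ρ x y ∂(P.map X) with hbdef
    have hb : 0 < b := hX0
    set e : ℝ := min (b / 2) (δ * b / 8) with hedef
    have he : 0 < e := lt_min (by linarith) (by positivity)
    obtain ⟨m, η, Δ, hη, hΔ, hmain⟩ := claim (P.map X) (fun n => P.map (Xn n))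
      (fun x => ρ x y) hg hgnn hXint hXnint hequi he
    obtain ⟨N, hN⟩ := H Δ hΔ
    refine ⟨N, fun n hn U hU => ?_⟩
    have hslice : ∀ V : Set F, MeasurableSet V →
        |(∫ x in V, ρ x y ∂(P.map (Xn n))) - ∫ x in V, ρ x y ∂(P.map X)| < e := by
      intro V hV
      exact hmain n V hV (fun j hj => (hN n hn _ (hSmeas V hV j η)).le)
    have hU1 := hslice U hU
    have hU2 := hslice Set.univ MeasurableSet.univ
    rw [setIntegral_univ, setIntegral_univ] at hU2
    have ha : 0 ≤ ∫ x in U, ρ x y ∂(P.map X) :=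
      setIntegral_nonneg hU fun x _ => hρnn x y
    have hab : (∫ x in U, ρ x y ∂(P.map X)) ≤ b :=
      setIntegral_le_integral hXint (Filter.Eventually.of_forall fun x => hρnn x y)
    have hrb := ratio_bound hb ha hab (min_le_left _ _) hU2.le hU1.le
    calc |(∫ x in U, ρ x y ∂(P.map (Xn n))) / (∫ x, ρ x y ∂(P.map (Xn n))) -
          (∫ x in U, ρ x y ∂(P.map X)) / (∫ x, ρ x y ∂(P.map X))| ≤ 4 * e / b := hrb
    _ ≤ 4 * (δ * b / 8) / b := by
        gcongr
        exact min_le_right _ _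
    _ = δ / 2 := by field_simp; ring
    _ < δ := by linarith
end

section
/- Let Z = Σ_{i=1}^∞ Z_i e_i be a Gaussian random variable in a separable Hilbert space G (with {e_i} an orthonormal basis of the Cameron–Martin space H and Z_i i.i.d. standard normals), let γ be a nonnegative real random variable with no atom at zero, let X be F-valued, with γ, X, Z mutually independent, and let L : F → H ⊆ G be continuous. Then for Y = L(X) + γZ, the limit lim_{n→∞} (1/n) Σ_{i=1}^n ⟨Y, C_Z^{-1} e_i⟩² exists P-almost surely and equals γ² P-almost surely. -/
open MeasureTheory ProbabilityTheory Filter Topology Real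
open scoped NNReal ENNReal

private lemma gpdfReal_eq (x : ℝ) :
    gaussianPDFReal 0 1 x = (Real.sqrt (2 * π))⁻¹ * Real.exp (-(1/2) * x ^ 2) := by
  rw [gaussianPDFReal]
  push_cast
  ring_nf

private lemma integral_sq_exp : ∫ x : ℝ, x ^ 2 * Real.exp (-(1/2) * x ^ 2) = Real.sqrt (2 * π) := by
  have h1 : ∫ x : ℝ, x ^ 2 * Real.exp (-(1/2) * x ^ 2)
      = 2 * ∫ x in Set.Ioi (0:ℝ), x ^ 2 * Real.exp (-(1/2) * x ^ 2) := by
    rw [← integral_comp_abs (f := fun x => x ^ 2 * Real.exp (-(1/2) * x ^ 2))]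
    congr 1; funext x; rw [sq_abs]
  have h2 : ∫ x in Set.Ioi (0:ℝ), x ^ 2 * Real.exp (-(1/2) * x ^ 2)
      = (1/2 : ℝ) ^ (-(3:ℝ)/2) * (1/2) * Real.Gamma (3/2) := by
    have := integral_rpow_mul_exp_neg_mul_rpow (p := 2) (q := 2) (b := 1/2)
      (by norm_num) (by norm_num) (by norm_num)
    rw [show ((2:ℝ) + 1) / 2 = 3/2 by norm_num, show (-((2:ℝ)+1))/2 = -(3:ℝ)/2 by norm_num] at this
    rw [← this]
    refine setIntegral_congr_fun measurableSet_Ioi (fun x hx => ?_)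
    rw [show ((2:ℝ)) = ((2:ℕ):ℝ) by norm_num, Real.rpow_natCast]
  rw [h1, h2]
  have hG : Real.Gamma (3/2) = Real.sqrt π / 2 := by
    rw [show (3:ℝ)/2 = 1/2 + 1 by norm_num, Real.Gamma_add_one (by norm_num),
      Real.Gamma_one_half_eq]
    ring
  have hp : (1/2 : ℝ) ^ (-(3:ℝ)/2) = 2 * Real.sqrt 2 := by
    rw [show (1/2:ℝ) = 2⁻¹ by norm_num, Real.inv_rpow (by norm_num),
      ← Real.rpow_neg (by norm_num), neg_div, neg_neg,
      show (3:ℝ)/2 = 1 + 1/2 by norm_num, Real.rpow_add (by norm_num), Real.rpow_one,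
      ← Real.sqrt_eq_rpow]
  rw [hG, hp, Real.sqrt_mul (by norm_num)]
  rw [show (2:ℝ) * (2 * Real.sqrt 2 * (1/2) * (Real.sqrt π / 2)) = Real.sqrt 2 * Real.sqrt π
    by ring]

private lemma integrable_sq_gauss : Integrable (fun x : ℝ => x ^ 2) (gaussianReal 0 1) := by
  rw [gaussianReal_of_var_ne_zero 0 one_ne_zero]
  have hpdf : (gaussianPDF 0 1) = fun x => ((Real.toNNReal (gaussianPDFReal 0 1 x) : ℝ≥0) : ℝ≥0∞) := by
    funext x; rfl
  rw [hpdf, integrable_withDensity_iff_integrable_smul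
    ((measurable_gaussianPDFReal 0 1).real_toNNReal)]
  have : (fun x : ℝ => (Real.toNNReal (gaussianPDFReal 0 1 x)) • (x ^ 2 : ℝ))
      = fun x : ℝ => (Real.sqrt (2 * π))⁻¹ * (x ^ ((2:ℕ):ℝ) * Real.exp (-(1/2) * x ^ 2)) := by
    funext x
    rw [NNReal.smul_def, smul_eq_mul, Real.coe_toNNReal _ (gaussianPDFReal_nonneg 0 1 x),
      gpdfReal_eq, Real.rpow_natCast]
    ring
  rw [this]
  exact (integrable_rpow_mul_exp_neg_mul_sq (by norm_num) (by norm_num)).const_mul _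

private lemma integral_sq_gauss : ∫ x, x ^ 2 ∂(gaussianReal 0 1) = 1 := by
  rw [gaussianReal_of_var_ne_zero 0 one_ne_zero]
  have hpdf : (gaussianPDF 0 1) = fun x => ((Real.toNNReal (gaussianPDFReal 0 1 x) : ℝ≥0) : ℝ≥0∞) := by
    funext x; rfl
  rw [hpdf, integral_withDensity_eq_integral_smul
    ((measurable_gaussianPDFReal 0 1).real_toNNReal)]
  have : (fun x : ℝ => (Real.toNNReal (gaussianPDFReal 0 1 x)) • (x ^ 2 : ℝ))
      = fun x : ℝ => (Real.sqrt (2 * π))⁻¹ * (x ^ 2 * Real.exp (-(1/2) * x ^ 2)) := by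
    funext x
    rw [NNReal.smul_def, smul_eq_mul, Real.coe_toNNReal _ (gaussianPDFReal_nonneg 0 1 x),
      gpdfReal_eq]
    ring
  rw [this, integral_const_mul, integral_sq_exp, inv_mul_cancel₀]
  positivity


private lemma sq_tendsto_zero {f : ℕ → ℝ} (h : Tendsto (fun n => f n ^ 2) atTop (𝓝 0)) :
    Tendsto f atTop (𝓝 0) := by
  have habs : Tendsto (fun n => |f n|) atTop (𝓝 0) := by
    have : Tendsto (fun n => Real.sqrt (f n ^ 2)) atTop (𝓝 (Real.sqrt 0)) :=
      (Real.continuous_sqrt.tendsto 0).comp h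
    simpa [Real.sqrt_sq_eq_abs] using this
  exact (tendsto_zero_iff_abs_tendsto_zero f).2 habs

private lemma cesaro_key {a z : ℕ → ℝ} (ha : Summable fun i => a i ^ 2)
    (hz : Tendsto (fun n : ℕ => (1 / (n : ℝ)) * ∑ i ∈ Finset.range n, z i ^ 2) atTop (𝓝 1))
    (c : ℝ) :
    Tendsto (fun n : ℕ => (1 / (n : ℝ)) * ∑ i ∈ Finset.range n, (a i + c * z i) ^ 2)
      atTop (𝓝 (c ^ 2)) := by
  have hA : Tendsto (fun n : ℕ => (1 / (n : ℝ)) * ∑ i ∈ Finset.range n, a i ^ 2)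
      atTop (𝓝 0) := by
    have := (tendsto_one_div_atTop_nhds_zero_nat).mul ha.hasSum.tendsto_sum_nat
    simpa using this
  have hB : Tendsto (fun n : ℕ => (1 / (n : ℝ)) * ∑ i ∈ Finset.range n, a i * z i)
      atTop (𝓝 0) := by
    apply sq_tendsto_zero
    have hle : ∀ n : ℕ, ((1 / (n : ℝ)) * ∑ i ∈ Finset.range n, a i * z i) ^ 2 ≤
        ((1 / (n : ℝ)) * ∑ i ∈ Finset.range n, a i ^ 2) *
          ((1 / (n : ℝ)) * ∑ i ∈ Finset.range n, z i ^ 2) := by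
      intro n
      have := Finset.sum_mul_sq_le_sq_mul_sq (Finset.range n) a z
      have h0 : (0:ℝ) ≤ 1 / (n : ℝ) := by positivity
      calc ((1 / (n : ℝ)) * ∑ i ∈ Finset.range n, a i * z i) ^ 2
          = (1 / (n : ℝ))^2 * (∑ i ∈ Finset.range n, a i * z i) ^ 2 := by ring
        _ ≤ (1 / (n : ℝ))^2 * ((∑ i ∈ Finset.range n, a i ^ 2) *
              ∑ i ∈ Finset.range n, z i ^ 2) := by
            apply mul_le_mul_of_nonneg_left this (by positivity)
        _ = ((1 / (n : ℝ)) * ∑ i ∈ Finset.range n, a i ^ 2) *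
              ((1 / (n : ℝ)) * ∑ i ∈ Finset.range n, z i ^ 2) := by ring
    have hub : Tendsto (fun n : ℕ => ((1 / (n : ℝ)) * ∑ i ∈ Finset.range n, a i ^ 2) *
        ((1 / (n : ℝ)) * ∑ i ∈ Finset.range n, z i ^ 2)) atTop (𝓝 0) := by
      simpa using hA.mul hz
    exact squeeze_zero (fun n => sq_nonneg _) hle hub
  have hfin : Tendsto (fun n : ℕ =>
      (1 / (n : ℝ)) * ∑ i ∈ Finset.range n, a i ^ 2
      + (2 * c) * ((1 / (n : ℝ)) * ∑ i ∈ Finset.range n, a i * z i)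
      + c ^ 2 * ((1 / (n : ℝ)) * ∑ i ∈ Finset.range n, z i ^ 2))
      atTop (𝓝 (0 + (2 * c) * 0 + c ^ 2 * 1)) :=
    (hA.add ((tendsto_const_nhds).mul hB)).add ((tendsto_const_nhds).mul hz)
  have heq : ∀ n : ℕ,
      (1 / (n : ℝ)) * ∑ i ∈ Finset.range n, (a i + c * z i) ^ 2 =
      (1 / (n : ℝ)) * ∑ i ∈ Finset.range n, a i ^ 2
      + (2 * c) * ((1 / (n : ℝ)) * ∑ i ∈ Finset.range n, a i * z i)
      + c ^ 2 * ((1 / (n : ℝ)) * ∑ i ∈ Finset.range n, z i ^ 2) := by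
    intro n
    have : ∑ i ∈ Finset.range n, (a i + c * z i) ^ 2 =
        ∑ i ∈ Finset.range n, (a i ^ 2 + (2 * c) * (a i * z i) + c ^ 2 * z i ^ 2) := by
      apply Finset.sum_congr rfl; intro i _; ring
    rw [this, Finset.sum_add_distrib, Finset.sum_add_distrib, ← Finset.mul_sum,
      ← Finset.mul_sum]
    ring
  have := hfin
  rw [show (0:ℝ) + (2*c)*0 + c^2*1 = c^2 by ring] at this
  exact (funext heq : _) ▸ this

/-- Spherically invariant noise: let `Z` be a Gaussian random variable in `G` whose standardized
coordinates `ξ i ∘ Z` (with `ξ i = ⟨·, C_Z⁻¹ e_i⟩` linear functionals) are i.i.d. standard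
normal, let `γ ≥ 0` have no atom at zero, `X` be `F`-valued, with `γ, X, Z` mutually
independent, and let `L` map `F` continuously into the Cameron–Martin space of `Z` (so that
`i ↦ ξ i (L x)` is square-summable). Then for `Y = L(X) + γ Z`, almost surely
`(1/n) Σ_{i<n} ⟨Y, C_Z⁻¹ e_i⟩² → γ²`. -/
theorem stmt18 {Ω F G : Type*} [mΩ : MeasurableSpace Ω]
    [TopologicalSpace F] [MeasurableSpace F] [BorelSpace F]
    [AddCommGroup G] [Module ℝ G] [TopologicalSpace G] [MeasurableSpace G] [BorelSpace G]
    (P : Measure Ω) [IsProbabilityMeasure P]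
    (Z : Ω → G) (γ : Ω → ℝ) (X : Ω → F)
    (hZ : Measurable Z) (hγ : Measurable γ) (hX : Measurable X)
    (hγnn : ∀ ω, 0 ≤ γ ω) (hγ0 : P {ω | γ ω = 0} = 0)
    (hind1 : IndepFun (fun ω => (γ ω, X ω)) Z P)
    (hind2 : IndepFun γ X P)
    (ξ : ℕ → G → ℝ) (hξlin : ∀ i, IsLinearMap ℝ (ξ i)) (hξmeas : ∀ i, Measurable (ξ i))
    (hξindep : iIndepFun (fun i ω => ξ i (Z ω)) P)
    (hξlaw : ∀ i, P.map (fun ω => ξ i (Z ω)) = gaussianReal 0 1)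
    (L : F → G) (hL : Continuous L)
    (hL2 : ∀ x, Summable fun i => ξ i (L x) ^ 2) :
    ∀ᵐ ω ∂P, Tendsto
      (fun n : ℕ =>
        (1 / (n : ℝ)) * ∑ i ∈ Finset.range n, ξ i (L (X ω) + γ ω • Z ω) ^ 2)
      atTop (𝓝 (γ ω ^ 2)) := by
  have hζmeas : ∀ i, Measurable (fun ω => ξ i (Z ω)) := fun i => (hξmeas i).comp hZ
  set W : ℕ → Ω → ℝ := fun i ω => ξ i (Z ω) ^ 2 with hW
  have hWmeas : ∀ i, Measurable (W i) := fun i => (hζmeas i).pow_const 2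
  have hint : Integrable (W 0) P := by
    have h : Integrable (fun x : ℝ => x ^ 2) (P.map (fun ω => ξ 0 (Z ω))) := by
      rw [hξlaw 0]; exact integrable_sq_gauss
    exact (integrable_map_measure
      (measurable_id.pow_const 2).aestronglyMeasurable (hζmeas 0).aemeasurable).1 h
  have hindep : Pairwise (Function.onFun (IndepFun · · P) W) := fun i j hij =>
    (hξindep.indepFun hij).comp (measurable_id.pow_const 2) (measurable_id.pow_const 2)
  have hident : ∀ i, IdentDistrib (W i) (W 0) P P := fun i =>
    (⟨(hζmeas i).aemeasurable, (hζmeas 0).aemeasurable, by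
      rw [hξlaw i, hξlaw 0]⟩ : IdentDistrib (fun ω => ξ i (Z ω)) (fun ω => ξ 0 (Z ω)) P P).comp
      (measurable_id.pow_const 2)
  have hPW : P[W 0] = 1 := by
    have : P[W 0] = ∫ x, x ^ 2 ∂(P.map (fun ω => ξ 0 (Z ω))) := by
      rw [integral_map (hζmeas 0).aemeasurable (continuous_pow 2).aestronglyMeasurable]
    rw [this, hξlaw 0, integral_sq_gauss]
  have hslln := strong_law_ae W hint hindep hident
  rw [hPW] at hslln
  filter_upwards [hslln] with ω hω
  have hz1 : Tendsto (fun n : ℕ => (1 / (n : ℝ)) * ∑ i ∈ Finset.range n, (ξ i (Z ω)) ^ 2)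
      atTop (𝓝 1) := by
    simpa [one_div, smul_eq_mul, hW] using hω
  have key := cesaro_key (hL2 (X ω)) hz1 (γ ω)
  have heq : ∀ i, ξ i (L (X ω) + γ ω • Z ω) = ξ i (L (X ω)) + γ ω * ξ i (Z ω) := fun i => by
    rw [(hξlin i).map_add, (hξlin i).map_smul, smul_eq_mul]
  simp only [heq]
  exact key
end

section
/- Let B be a standard Brownian motion on [0,T] and ε_t = B_{α_t} a time-changed process where α is an independent strictly increasing continuous process with α_0 = 0; then ε defines a C([0,T])-valued random variable, and for any Borel set V ⊆ C([0,T]) and any deterministic continuous path g of α, the conditional probability E[1_V(B_α + h) | σ(α)] evaluated at α = g equals the Gaussian measure on C([0,T]) with mean h and covariance kernel C_g(t,s) = min(g(t), g(s)). -/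
open MeasureTheory ProbabilityTheory Filter Topology

open scoped NNReal ENNReal

section Stmt19Aux

variable {Ω : Type*} [MeasurableSpace Ω] {P : Measure Ω} [IsProbabilityMeasure P]

lemma cexp_I_mul (x : ℝ) :
    Complex.exp (Complex.I * x) = ((Real.cos x : ℝ) : ℂ) + ((Real.sin x : ℝ) : ℂ) * Complex.I := by
  rw [mul_comm, Complex.exp_mul_I]; simp [Complex.ofReal_cos, Complex.ofReal_sin]


lemma integrable_of_bound (f : Ω → ℝ) (hf : Measurable f) (C : ℝ) (hC : ∀ ω, |f ω| ≤ C) :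
    Integrable f P :=
  (integrable_const C).mono' hf.aestronglyMeasurable (Filter.Eventually.of_forall hC)

lemma char_add {f g : Ω → ℝ} (hf : Measurable f) (hg : Measurable g)
    (hfg : IndepFun f g P) :
    ∫ ω, Complex.exp (Complex.I * ((f ω + g ω : ℝ) : ℂ)) ∂P
      = (∫ ω, Complex.exp (Complex.I * ((f ω : ℝ) : ℂ)) ∂P)
        * ∫ ω, Complex.exp (Complex.I * ((g ω : ℝ) : ℂ)) ∂P := by
  have icf : Integrable (fun ω => Real.cos (f ω)) P :=
    integrable_of_bound _ (Real.measurable_cos.comp hf) 1 fun ω => Real.abs_cos_le_one _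
  have isf : Integrable (fun ω => Real.sin (f ω)) P :=
    integrable_of_bound _ (Real.measurable_sin.comp hf) 1 fun ω => Real.abs_sin_le_one _
  have icg : Integrable (fun ω => Real.cos (g ω)) P :=
    integrable_of_bound _ (Real.measurable_cos.comp hg) 1 fun ω => Real.abs_cos_le_one _
  have isg : Integrable (fun ω => Real.sin (g ω)) P :=
    integrable_of_bound _ (Real.measurable_sin.comp hg) 1 fun ω => Real.abs_sin_le_one _
  have key : ∀ (F : Ω → ℝ), Integrable (fun ω => Real.cos (F ω)) P →
      Integrable (fun ω => Real.sin (F ω)) P →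
      ∫ ω, Complex.exp (Complex.I * ((F ω : ℝ) : ℂ)) ∂P
        = ((∫ ω, Real.cos (F ω) ∂P : ℝ) : ℂ) + ((∫ ω, Real.sin (F ω) ∂P : ℝ) : ℂ) * Complex.I := by
    intro F hc hs
    calc ∫ ω, Complex.exp (Complex.I * ((F ω : ℝ) : ℂ)) ∂P
        = ∫ ω, (((Real.cos (F ω) : ℝ) : ℂ) + ((Real.sin (F ω) : ℝ) : ℂ) * Complex.I) ∂P := by
          simp_rw [cexp_I_mul]
      _ = (∫ ω, ((Real.cos (F ω) : ℝ) : ℂ) ∂P) + ∫ ω, ((Real.sin (F ω) : ℝ) : ℂ) * Complex.I ∂P := by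
          have hc' : Integrable (fun ω => ((Real.cos (F ω) : ℝ) : ℂ)) P := hc.ofReal
          have hs' : Integrable (fun ω => ((Real.sin (F ω) : ℝ) : ℂ) * Complex.I) P :=
            Integrable.mul_const (hs.ofReal) Complex.I
          rw [integral_add hc' hs']
      _ = ((∫ ω, Real.cos (F ω) ∂P : ℝ) : ℂ) + ((∫ ω, Real.sin (F ω) ∂P : ℝ) : ℂ) * Complex.I := by
          rw [integral_mul_const]
          have e1 : ∫ ω, ((Real.cos (F ω) : ℝ) : ℂ) ∂P = ((∫ ω, Real.cos (F ω) ∂P : ℝ) : ℂ) :=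
            integral_ofReal
          have e2 : ∫ ω, ((Real.sin (F ω) : ℝ) : ℂ) ∂P = ((∫ ω, Real.sin (F ω) ∂P : ℝ) : ℂ) :=
            integral_ofReal
          rw [e1, e2]
  have hca : ∫ ω, Real.cos (f ω + g ω) ∂P
      = (∫ ω, Real.cos (f ω) ∂P) * (∫ ω, Real.cos (g ω) ∂P)
        - (∫ ω, Real.sin (f ω) ∂P) * (∫ ω, Real.sin (g ω) ∂P) := by
    have h1 : (∫ ω, Real.cos (f ω) * Real.cos (g ω) ∂P)
        = (∫ ω, Real.cos (f ω) ∂P) * (∫ ω, Real.cos (g ω) ∂P) :=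
      (hfg.comp Real.measurable_cos Real.measurable_cos).integral_fun_mul_eq_mul_integral
        icf.aestronglyMeasurable icg.aestronglyMeasurable
    have h2 : (∫ ω, Real.sin (f ω) * Real.sin (g ω) ∂P)
        = (∫ ω, Real.sin (f ω) ∂P) * (∫ ω, Real.sin (g ω) ∂P) :=
      (hfg.comp Real.measurable_sin Real.measurable_sin).integral_fun_mul_eq_mul_integral
        isf.aestronglyMeasurable isg.aestronglyMeasurable
    simp_rw [Real.cos_add]
    have i1 : Integrable (fun ω => Real.cos (f ω) * Real.cos (g ω)) P :=
      integrable_of_bound _ ((Real.measurable_cos.comp hf).mul (Real.measurable_cos.comp hg)) 1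
        fun ω => by rw [abs_mul]
                    exact mul_le_one₀ (Real.abs_cos_le_one _) (abs_nonneg _) (Real.abs_cos_le_one _)
    have i2 : Integrable (fun ω => Real.sin (f ω) * Real.sin (g ω)) P :=
      integrable_of_bound _ ((Real.measurable_sin.comp hf).mul (Real.measurable_sin.comp hg)) 1
        fun ω => by rw [abs_mul]
                    exact mul_le_one₀ (Real.abs_sin_le_one _) (abs_nonneg _) (Real.abs_sin_le_one _)
    rw [integral_sub i1 i2, h1, h2]
  have hsa : ∫ ω, Real.sin (f ω + g ω) ∂P
      = (∫ ω, Real.sin (f ω) ∂P) * (∫ ω, Real.cos (g ω) ∂P)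
        + (∫ ω, Real.cos (f ω) ∂P) * (∫ ω, Real.sin (g ω) ∂P) := by
    have h1 : (∫ ω, Real.sin (f ω) * Real.cos (g ω) ∂P)
        = (∫ ω, Real.sin (f ω) ∂P) * (∫ ω, Real.cos (g ω) ∂P) :=
      (hfg.comp Real.measurable_sin Real.measurable_cos).integral_fun_mul_eq_mul_integral
        isf.aestronglyMeasurable icg.aestronglyMeasurable
    have h2 : (∫ ω, Real.cos (f ω) * Real.sin (g ω) ∂P)
        = (∫ ω, Real.cos (f ω) ∂P) * (∫ ω, Real.sin (g ω) ∂P) :=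
      (hfg.comp Real.measurable_cos Real.measurable_sin).integral_fun_mul_eq_mul_integral
        icf.aestronglyMeasurable isg.aestronglyMeasurable
    simp_rw [Real.sin_add]
    have i1 : Integrable (fun ω => Real.sin (f ω) * Real.cos (g ω)) P :=
      integrable_of_bound _ ((Real.measurable_sin.comp hf).mul (Real.measurable_cos.comp hg)) 1
        fun ω => by rw [abs_mul]
                    exact mul_le_one₀ (Real.abs_sin_le_one _) (abs_nonneg _) (Real.abs_cos_le_one _)
    have i2 : Integrable (fun ω => Real.cos (f ω) * Real.sin (g ω)) P :=
      integrable_of_bound _ ((Real.measurable_cos.comp hf).mul (Real.measurable_sin.comp hg)) 1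
        fun ω => by rw [abs_mul]
                    exact mul_le_one₀ (Real.abs_cos_le_one _) (abs_nonneg _) (Real.abs_sin_le_one _)
    rw [integral_add i1 i2, h1, h2]
  rw [key _ icf isf, key _ icg isg,
    key (fun ω => f ω + g ω)
      (integrable_of_bound _ (Real.measurable_cos.comp (hf.add hg)) 1 fun ω => Real.abs_cos_le_one _)
      (integrable_of_bound _ (Real.measurable_sin.comp (hf.add hg)) 1 fun ω => Real.abs_sin_le_one _),
    hca, hsa]
  push_cast
  linear_combination (-((∫ ω, Real.sin (f ω) ∂P : ℝ) : ℂ) * ((∫ ω, Real.sin (g ω) ∂P : ℝ) : ℂ)) * Complex.I_sq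

lemma char_sum {ι : Type*} (s : Finset ι) (X : ι → Ω → ℝ) (hX : ∀ i, Measurable (X i))
    (hind : iIndepFun X P) :
    ∫ ω, Complex.exp (Complex.I * ((∑ i ∈ s, X i ω : ℝ) : ℂ)) ∂P
      = ∏ i ∈ s, ∫ ω, Complex.exp (Complex.I * ((X i ω : ℝ) : ℂ)) ∂P := by
  classical
  induction s using Finset.cons_induction with
  | empty => simp
  | cons a s ha ih =>
    have hs : Measurable (fun ω => ∑ i ∈ s, X i ω) := by
      apply Finset.measurable_sum
      exact fun i _ => hX i
    have hia : IndepFun (∑ j ∈ s, X j) (X a) P :=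
      hind.indepFun_finsetSum_of_notMem hX ha
    have hia' : IndepFun (X a) (fun ω => ∑ i ∈ s, X i ω) P := by
      have := hia.symm
      convert this using 1
      ext ω
      simp [Finset.sum_apply]
    simp_rw [Finset.sum_cons, Finset.prod_cons, ← ih]
    exact char_add (P := P) (hX a) hs hia'

end Stmt19Aux

lemma telescope {n : ℕ} (f : Fin (n + 1) → ℝ) (p : Fin (n + 1)) :
    f p = f 0 + ∑ i : Fin n, if (i : ℕ) < (p : ℕ) then f i.succ - f i.castSucc else 0 := by
  induction p using Fin.induction with
  | zero => simp
  | succ q ih =>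
    have split : ∀ i : Fin n, (if (i : ℕ) < ((q.succ : Fin (n+1)) : ℕ) then f i.succ - f i.castSucc else 0)
        = (if (i : ℕ) < ((q.castSucc : Fin (n+1)) : ℕ) then f i.succ - f i.castSucc else 0)
          + (if i = q then f i.succ - f i.castSucc else 0) := by
      intro i
      simp only [Fin.val_succ, Fin.coe_castSucc]
      rcases lt_trichotomy (i : ℕ) (q : ℕ) with hlt | heq | hgt
      · rw [if_pos (by omega), if_pos hlt, if_neg (by intro hh; subst hh; omega)]
        ring
      · have : i = q := Fin.ext heq
        subst this
        rw [if_pos (by omega), if_neg (by omega), if_pos rfl]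
        ring
      · rw [if_neg (by omega), if_neg (by omega), if_neg (by intro hh; subst hh; omega)]
        ring
    simp_rw [split]
    rw [Finset.sum_add_distrib, Finset.sum_ite_eq' Finset.univ q
      (fun i => f i.succ - f i.castSucc), if_pos (Finset.mem_univ q), ← add_assoc, ← ih]
    ring

section
open Real

lemma charGaussian (v : ℝ≥0) (a : ℝ) :
    ∫ x, Complex.exp (Complex.I * ((a * x : ℝ) : ℂ)) ∂(gaussianReal 0 v)
      = Complex.exp (((-(a ^ 2 * (v : ℝ)) / 2 : ℝ) : ℂ)) := by
  by_cases hv : v = 0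
  · subst hv
    rw [gaussianReal_zero_var, integral_dirac]
    norm_num
  · rw [gaussianReal_of_var_ne_zero _ hv]
    have hpdf : (gaussianPDF 0 v) = fun x => ((Real.toNNReal (gaussianPDFReal 0 v x) : ℝ≥0) : ℝ≥0∞) := by
      funext x; rfl
    rw [hpdf, integral_withDensity_eq_integral_smul
      ((measurable_gaussianPDFReal 0 v).real_toNNReal) _]
    have hvpos : (0:ℝ) < v := lt_of_le_of_ne (v.coe_nonneg) (by exact_mod_cast (Ne.symm hv))
    have h2v : (0:ℝ) < 2 * π * v := by positivity
    have hsq : Real.sqrt (2 * π * v) ≠ 0 := by positivity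
    have key : ∀ x : ℝ, (Real.toNNReal (gaussianPDFReal 0 v x) : ℝ≥0) • Complex.exp (Complex.I * ((a * x : ℝ) : ℂ))
        = ((Real.sqrt (2 * π * v))⁻¹ : ℂ) *
          Complex.exp ((-(1 / (2 * v)) : ℂ) * (x:ℂ) ^ 2 + (Complex.I * a) * (x:ℂ) + 0) := by
      intro x
      have hnn := gaussianPDFReal_nonneg 0 v x
      rw [NNReal.smul_def, Real.coe_toNNReal _ hnn]
      rw [gaussianPDFReal, Complex.real_smul]
      push_cast [Complex.ofReal_exp]
      rw [mul_assoc, ← Complex.exp_add]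
      congr 1
      have : ((v:ℝ) : ℂ) ≠ 0 := by exact_mod_cast hvpos.ne'
      field_simp
      ring
    simp_rw [key]
    rw [integral_const_mul]
    have hb : (-(1 / (2 * (v:ℝ))) : ℂ).re < 0 := by
      have hvpos' : (0:ℝ) < (v:ℝ) := hvpos
      simp only [Complex.neg_re, Complex.div_re]
      norm_num
      positivity
    rw [integral_cexp_quadratic hb (Complex.I * a) 0]
    have e1 : ((π : ℂ) / -(-(1 / (2 * (v:ℝ))) : ℂ)) = ((2 * π * (v:ℝ) : ℝ) : ℂ) := by
      have : ((v:ℝ) : ℂ) ≠ 0 := by exact_mod_cast hvpos.ne'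
      push_cast
      field_simp
    have e2 : ((2 * π * (v:ℝ) : ℝ) : ℂ) ^ (1 / 2 : ℂ) = ((Real.sqrt (2 * π * (v:ℝ)) : ℝ) : ℂ) := by
      have : ((1:ℂ)/2) = (((1/2 : ℝ)) : ℂ) := by norm_num
      rw [this, ← Complex.ofReal_cpow h2v.le]
      rw [← Real.sqrt_eq_rpow]
    have e3 : ((0:ℂ) - (Complex.I * a) ^ 2 / (4 * (-(1 / (2 * (v:ℝ))) : ℂ)))
        = ((-(a ^ 2 * (v : ℝ)) / 2 : ℝ) : ℂ) := by
      have hvne : ((v:ℝ) : ℂ) ≠ 0 := by exact_mod_cast hvpos.ne'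
      field_simp
      push_cast
      linear_combination (((a:ℂ))^2 * ((v:ℝ):ℂ) * 2) * Complex.I_sq
    rw [e1, e2, e3, ← mul_assoc, ← Complex.ofReal_inv, ← Complex.ofReal_mul,
      inv_mul_cancel₀ hsq]
    simp

end

lemma coreB {Ω : Type*} [MeasurableSpace Ω] (P : Measure Ω) [IsProbabilityMeasure P]
    [MeasurableSpace C(ℝ, ℝ)] [BorelSpace C(ℝ, ℝ)]
    (B : Ω → C(ℝ, ℝ)) (hBmeas : Measurable B)
    (hB0 : ∀ᵐ ω ∂P, B ω 0 = 0)
    (hBincr : ∀ (n : ℕ) (t : Fin (n + 1) → ℝ), Monotone t → (∀ j, 0 ≤ t j) →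
      iIndepFun
        (fun (j : Fin n) (ω : Ω) => B ω (t j.succ) - B ω (t j.castSucc)) P)
    (hBlaw : ∀ s t : ℝ, 0 ≤ s → s ≤ t →
      P.map (fun ω => B ω t - B ω s) = gaussianReal 0 (Real.toNNReal (t - s)))
    (n : ℕ) (s : Fin n → ℝ) (hs : ∀ j, 0 ≤ s j) (c : Fin n → ℝ) :
    ∫ ω, Complex.exp (Complex.I * ((∑ j, c j * B ω (s j) : ℝ) : ℂ)) ∂P
      = Complex.exp (((-(∑ j, ∑ l, c j * c l * min (s j) (s l)) / 2 : ℝ) : ℂ)) := by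
  classical
  set w : Fin (n + 1) → ℝ := Fin.cons 0 s with hw
  set σ := Tuple.sort w with hσ
  set u : Fin (n + 1) → ℝ := w ∘ σ with hu
  have mono : Monotone u := Tuple.monotone_sort w
  have wnn : ∀ p, 0 ≤ w p := fun p => by
    induction p using Fin.cases with
    | zero => simp [hw]
    | succ j => simpa [hw] using hs j
  have unn : ∀ p, 0 ≤ u p := fun p => wnn _
  have u0 : u 0 = 0 := by
    refine le_antisymm ?_ (unn 0)
    have h1 : u 0 ≤ u (σ⁻¹ 0) := mono (Fin.zero_le _)
    simpa [hu, Equiv.Perm.inv_def, Equiv.apply_symm_apply, hw] using h1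
  set k : Fin n → Fin (n + 1) := fun j => σ⁻¹ j.succ with hkdef
  have hk : ∀ j, u (k j) = s j := fun j => by
    simp [hu, hkdef, Equiv.Perm.inv_def, Equiv.apply_symm_apply, hw]
  have hBt : ∀ t : ℝ, Measurable fun ω => B ω t := fun t =>
    (continuous_eval_const t).measurable.comp hBmeas
  set Δ : Fin n → Ω → ℝ := fun i ω => B ω (u i.succ) - B ω (u i.castSucc) with hΔdef
  have hΔm : ∀ i, Measurable (Δ i) := fun i => (hBt _).sub (hBt _)
  have hΔind : iIndepFun Δ P := hBincr n u mono unn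
  set d : Fin n → ℝ := fun i => ∑ j, if (i : ℕ) < ((k j : Fin (n+1)) : ℕ) then c j else 0 with hddef
  set X : Fin n → Ω → ℝ := fun i ω => d i * Δ i ω with hXdef
  have hXm : ∀ i, Measurable (X i) := fun i => (hΔm i).const_mul _
  have hXind : iIndepFun X P := by
    exact hΔind.comp (fun i x => d i * x) (fun i => measurable_const_mul _)
  have Δu_nn : ∀ i : Fin n, 0 ≤ u i.succ - u i.castSucc := fun i =>
    sub_nonneg.mpr (mono (le_of_lt (Fin.castSucc_lt_succ (i := i))))
  -- a.e. rewriting of the sum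
  have hae : ∀ᵐ ω ∂P, (∑ j, c j * B ω (s j)) = ∑ i, X i ω := by
    filter_upwards [hB0] with ω hω
    have hBu : ∀ p : Fin (n + 1),
        B ω (u p) = ∑ i : Fin n, if (i : ℕ) < (p : ℕ) then Δ i ω else 0 := by
      intro p
      have := telescope (fun q => B ω (u q)) p
      rw [show u 0 = 0 from u0] at this
      rw [hω] at this
      simpa [hΔdef] using this
    calc ∑ j, c j * B ω (s j)
        = ∑ j, c j * B ω (u (k j)) := by simp_rw [hk]
      _ = ∑ j, ∑ i : Fin n, (if (i : ℕ) < ((k j : Fin (n+1)) : ℕ) then c j * Δ i ω else 0) := by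
          refine Finset.sum_congr rfl fun j _ => ?_
          rw [hBu (k j), Finset.mul_sum]
          exact Finset.sum_congr rfl fun i _ => by rw [mul_ite, mul_zero]
      _ = ∑ i : Fin n, ∑ j, (if (i : ℕ) < ((k j : Fin (n+1)) : ℕ) then c j * Δ i ω else 0) :=
          Finset.sum_comm
      _ = ∑ i, X i ω := by
          refine Finset.sum_congr rfl fun i _ => ?_
          rw [hXdef]
          simp only [hddef, Finset.sum_mul]
          exact Finset.sum_congr rfl fun j _ => by rw [ite_mul, zero_mul]
  have hint : ∫ ω, Complex.exp (Complex.I * ((∑ j, c j * B ω (s j) : ℝ) : ℂ)) ∂P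
      = ∫ ω, Complex.exp (Complex.I * ((∑ i, X i ω : ℝ) : ℂ)) ∂P := by
    refine integral_congr_ae (hae.mono fun ω hω => by dsimp only; rw [hω])
  rw [hint, char_sum Finset.univ X hXm hXind]
  -- evaluate each factor
  have factor : ∀ i : Fin n, ∫ ω, Complex.exp (Complex.I * ((X i ω : ℝ) : ℂ)) ∂P
      = Complex.exp (((-(d i ^ 2 * (u i.succ - u i.castSucc)) / 2 : ℝ) : ℂ)) := by
    intro i
    have hmap : P.map (Δ i) = gaussianReal 0 (Real.toNNReal (u i.succ - u i.castSucc)) :=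
      hBlaw _ _ (unn _) (mono (le_of_lt (Fin.castSucc_lt_succ (i := i))))
    have hg : AEStronglyMeasurable
        (fun x : ℝ => Complex.exp (Complex.I * ((d i * x : ℝ) : ℂ))) (P.map (Δ i)) := by
      refine Continuous.aestronglyMeasurable ?_
      exact Complex.continuous_exp.comp
        (continuous_const.mul (Complex.continuous_ofReal.comp
          (continuous_const.mul continuous_id)))
    have hmi := integral_map (hΔm i).aemeasurable hg
    simp only [hXdef]
    rw [← hmi, hmap, charGaussian, Real.coe_toNNReal _ (Δu_nn i)]
  have minkey : ∀ j l : Fin n, c j * c l * min (s j) (s l)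
      = ∑ i : Fin n, (if (i : ℕ) < ((k j : Fin (n+1)) : ℕ) then c j else 0)
          * (if (i : ℕ) < ((k l : Fin (n+1)) : ℕ) then c l else 0)
          * (u i.succ - u i.castSucc) := by
    intro j l
    have hmin : min (s j) (s l) = ∑ i : Fin n,
        if (i : ℕ) < ((min (k j) (k l) : Fin (n+1)) : ℕ) then (u i.succ - u i.castSucc) else 0 := by
      have ht := telescope u (min (k j) (k l))
      rw [u0, zero_add] at ht
      rw [← hk j, ← hk l, ← mono.map_min, ht]
    rw [hmin, Finset.mul_sum]
    refine Finset.sum_congr rfl fun i _ => ?_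
    have hcoe : ((min (k j) (k l) : Fin (n+1)) : ℕ) = min ((k j) : ℕ) ((k l) : ℕ) := by simp
    by_cases h1 : (i : ℕ) < ((k j) : ℕ) <;> by_cases h2 : (i : ℕ) < ((k l) : ℕ) <;>
      simp [h1, h2, hcoe, lt_min_iff]
  have quad : ∑ i, d i ^ 2 * (u i.succ - u i.castSucc)
      = ∑ j, ∑ l, c j * c l * min (s j) (s l) := by
    calc ∑ i, d i ^ 2 * (u i.succ - u i.castSucc)
        = ∑ i : Fin n, ∑ j : Fin n, ∑ l : Fin n,
            (if (i : ℕ) < ((k j : Fin (n+1)) : ℕ) then c j else 0)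
              * (if (i : ℕ) < ((k l : Fin (n+1)) : ℕ) then c l else 0)
              * (u i.succ - u i.castSucc) := by
          refine Finset.sum_congr rfl fun i _ => ?_
          rw [hddef]
          dsimp only
          rw [sq, Finset.sum_mul_sum, Finset.sum_mul]
          refine Finset.sum_congr rfl fun j _ => ?_
          rw [Finset.sum_mul]
      _ = ∑ j : Fin n, ∑ l : Fin n, ∑ i : Fin n,
            (if (i : ℕ) < ((k j : Fin (n+1)) : ℕ) then c j else 0)
              * (if (i : ℕ) < ((k l : Fin (n+1)) : ℕ) then c l else 0)
              * (u i.succ - u i.castSucc) := by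
          rw [Finset.sum_comm]
          exact Finset.sum_congr rfl fun j _ => Finset.sum_comm
      _ = ∑ j, ∑ l, c j * c l * min (s j) (s l) := by
          exact Finset.sum_congr rfl fun j _ => Finset.sum_congr rfl fun l _ => (minkey j l).symm
  simp_rw [factor]
  rw [← Complex.exp_sum]
  congr 1
  rw [← Complex.ofReal_sum]
  norm_cast
  rw [← quad]
  rw [neg_div, ← Finset.sum_div, Finset.sum_neg_distrib]
  simp [neg_div]

/-- Time-changed Brownian motion: if `B` is a standard Brownian motion (characterized by
`B 0 = 0` a.s., independent increments, and Gaussian increments `B_t − B_s ∼ N(0, t−s)`),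
`α` is an independent strictly increasing continuous process with `α 0 = 0`, then
`ε = B ∘ α` defines a `C([0,T])`-valued random variable, and there is a family of measures
`m g` on `C([0,T])` such that for every admissible deterministic path `g` the measure `m g`
is the Gaussian measure with mean `h` and covariance kernel `min (g t) (g s)` (characterized
by its finite-dimensional characteristic functions), and for every Borel `V ⊆ C([0,T])` the
conditional expectation `E[1_V(B∘α + h) | σ(α)]` is a.s. equal to `ω ↦ m (α ω) V`. -/
theorem stmt19 {Ω : Type*} [mΩ : MeasurableSpace Ω]
    (P : Measure Ω) [IsProbabilityMeasure P] (hP : P.IsComplete)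
    (T : ℝ) (hT : 0 < T)
    [MeasurableSpace C(ℝ, ℝ)] [BorelSpace C(ℝ, ℝ)]
    [MeasurableSpace C(↥(Set.Icc (0:ℝ) T), ℝ)] [BorelSpace C(↥(Set.Icc (0:ℝ) T), ℝ)]
    (B : Ω → C(ℝ, ℝ)) (hBmeas : Measurable B)
    (hB0 : ∀ᵐ ω ∂P, B ω 0 = 0)
    (hBincr : ∀ (n : ℕ) (t : Fin (n + 1) → ℝ), Monotone t → (∀ j, 0 ≤ t j) →
      iIndepFun
        (fun (j : Fin n) (ω : Ω) => B ω (t j.succ) - B ω (t j.castSucc)) P)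
    (hBlaw : ∀ s t : ℝ, 0 ≤ s → s ≤ t →
      P.map (fun ω => B ω t - B ω s) = gaussianReal 0 (Real.toNNReal (t - s)))
    (α : Ω → C(↥(Set.Icc (0:ℝ) T), ℝ)) (hαmeas : Measurable α)
    (hαmono : ∀ ω, StrictMono ⇑(α ω))
    (hα0 : ∀ ω, ∀ u : ↥(Set.Icc (0:ℝ) T), (u : ℝ) = 0 → α ω u = 0)
    (hαnn : ∀ ω u, 0 ≤ α ω u)
    (hindep : IndepFun B α P)
    (h : C(↥(Set.Icc (0:ℝ) T), ℝ)) :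
    Measurable (fun ω => (B ω).comp (α ω)) ∧
    ∃ m : C(↥(Set.Icc (0:ℝ) T), ℝ) → Measure C(↥(Set.Icc (0:ℝ) T), ℝ),
      (∀ g : C(↥(Set.Icc (0:ℝ) T), ℝ), StrictMono ⇑g →
        (∀ u : ↥(Set.Icc (0:ℝ) T), (u : ℝ) = 0 → g u = 0) →
        (IsProbabilityMeasure (m g) ∧
          ∀ (n : ℕ) (t : Fin n → ↥(Set.Icc (0:ℝ) T)) (c : Fin n → ℝ),
            ∫ y, Complex.exp (Complex.I * ((∑ j, c j * y (t j) : ℝ) : ℂ)) ∂(m g) =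
              Complex.exp (Complex.I * ((∑ j, c j * h (t j) : ℝ) : ℂ) -
                (1 / 2 : ℂ) *
                  ((∑ j, ∑ l, c j * c l * min (g (t j)) (g (t l)) : ℝ) : ℂ)))) ∧
      ∀ V : Set C(↥(Set.Icc (0:ℝ) T), ℝ), MeasurableSet V →
        (fun ω => (m (α ω) V).toReal) =ᵐ[P]
          P[fun ω => Set.indicator V (fun _ => (1 : ℝ)) ((B ω).comp (α ω) + h)|
            MeasurableSpace.comap α inferInstance] := by
  classical
  set K := ↥(Set.Icc (0:ℝ) T)
  -- continuity / measurability of composition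
  have contComp : Continuous fun p : C(ℝ, ℝ) × C(K, ℝ) => p.1.comp p.2 :=
    ContinuousMap.continuous_comp'.comp continuous_swap
  have measComp : Measurable fun ω => (B ω).comp (α ω) :=
    contComp.measurable.comp (hBmeas.prodMk hαmeas)
  refine ⟨measComp, ?_⟩
  -- the family of measures
  set F : C(ℝ, ℝ) × C(K, ℝ) → C(K, ℝ) := fun p => p.1.comp p.2 + h with hF
  have contF : Continuous F := contComp.add continuous_const
  have measFg : ∀ g : C(K, ℝ), Measurable fun b : C(ℝ, ℝ) => F (b, g) :=
    fun g => (contF.comp (continuous_id.prodMk continuous_const)).measurable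
  set m : C(K, ℝ) → Measure C(K, ℝ) := fun g => P.map (fun ω => F (B ω, g)) with hm
  have measωg : ∀ g : C(K, ℝ), Measurable fun ω => F (B ω, g) :=
    fun g => (measFg g).comp hBmeas
  have hprob : ∀ g, IsProbabilityMeasure (m g) :=
    fun g => Measure.isProbabilityMeasure_map (measωg g).aemeasurable
  have hzeroK : ((⟨0, by constructor <;> simp [hT.le]⟩ : K) : ℝ) = 0 := rfl
  refine ⟨m, fun g hgmono hg0 => ⟨hprob g, ?_⟩, ?_⟩
  · -- characteristic functions
    intro n t c
    have hgnn : ∀ j, 0 ≤ g (t j) := by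
      intro j
      have h0 : g (⟨0, by constructor <;> simp [hT.le]⟩ : K) = 0 := hg0 _ rfl
      have h1 : g (⟨0, by constructor <;> simp [hT.le]⟩ : K) ≤ g (t j) :=
        hgmono.monotone (Subtype.coe_le_coe.mp (by simpa [hzeroK] using (t j).2.1))
      rwa [h0] at h1
    have contInt : Continuous fun y : C(K, ℝ) =>
        Complex.exp (Complex.I * ((∑ j, c j * y (t j) : ℝ) : ℂ)) := by
      refine Complex.continuous_exp.comp (continuous_const.mul
        (Complex.continuous_ofReal.comp ?_))
      exact continuous_finset_sum _ fun j _ =>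
        continuous_const.mul (continuous_eval_const (t j))
    rw [integral_map (measωg g).aemeasurable contInt.aestronglyMeasurable]
    have hpt : ∀ ω, (∑ j, c j * (F (B ω, g)) (t j) : ℝ)
        = (∑ j, c j * B ω (g (t j))) + (∑ j, c j * h (t j)) := by
      intro ω
      rw [← Finset.sum_add_distrib]
      refine Finset.sum_congr rfl fun j _ => ?_
      simp [hF, mul_add]
    have step : ∀ ω, Complex.exp (Complex.I * ((∑ j, c j * (F (B ω, g)) (t j) : ℝ) : ℂ))
        = Complex.exp (Complex.I * ((∑ j, c j * B ω (g (t j)) : ℝ) : ℂ))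
          * Complex.exp (Complex.I * ((∑ j, c j * h (t j) : ℝ) : ℂ)) := by
      intro ω
      rw [← Complex.exp_add, hpt ω]
      push_cast
      ring_nf
    simp_rw [step]
    rw [integral_mul_const]
    rw [coreB P B hBmeas hB0 hBincr hBlaw n (fun j => g (t j)) hgnn c]
    rw [← Complex.exp_add]
    congr 1
    push_cast
    ring
  · -- conditional expectation
    intro V hV
    have hmle : MeasurableSpace.comap α inferInstance ≤ mΩ := hαmeas.comap_le
    set μB := P.map B with hμB
    set μα := P.map α with hμα
    have : IsProbabilityMeasure μB := Measure.isProbabilityMeasure_map hBmeas.aemeasurable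
    have : IsProbabilityMeasure μα := Measure.isProbabilityMeasure_map hαmeas.aemeasurable
    have joint : P.map (fun ω => (B ω, α ω)) = μB.prod μα :=
      (indepFun_iff_map_prod_eq_prod_map_map hBmeas.aemeasurable hαmeas.aemeasurable).mp hindep
    have hsV : MeasurableSet (F ⁻¹' V) := contF.measurable hV
    have hmV : ∀ g, m g V = μB ((fun x => (x, g)) ⁻¹' (F ⁻¹' V)) := by
      intro g
      rw [hm]
      rw [Measure.map_apply (measωg g) hV, hμB,
        Measure.map_apply hBmeas (measurable_prodMk_right hsV)]
      rfl
    have hGmeas : Measurable fun g => (m g V).toReal := by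
      have : Measurable fun g : C(K, ℝ) => μB ((fun x => (x, g)) ⁻¹' (F ⁻¹' V)) :=
        measurable_measure_prodMk_right hsV
      simp_rw [hmV]
      exact this.ennreal_toReal
    set G : Ω → ℝ := fun ω => (m (α ω) V).toReal with hG
    set f : Ω → ℝ := fun ω => Set.indicator V (fun _ => (1:ℝ)) ((B ω).comp (α ω) + h) with hf
    have hGbound : ∀ ω, |G ω| ≤ 1 := by
      intro ω
      rw [hG, abs_of_nonneg ENNReal.toReal_nonneg]
      exact ENNReal.toReal_le_of_le_ofReal zero_le_one (by
        simpa using prob_le_one (μ := m (α ω)) (s := V))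
    have hfmeas : Measurable f :=
      (measurable_const.indicator hV).comp (contF.measurable.comp (hBmeas.prodMk hαmeas))
    have hfbound : ∀ ω, |f ω| ≤ 1 := by
      intro ω
      rw [hf]
      by_cases hω : ((B ω).comp (α ω) + h) ∈ V <;> simp [Set.indicator_apply, hω]
    have hfint : Integrable f P := integrable_of_bound f hfmeas 1 hfbound
    have hGint : Integrable G P :=
      integrable_of_bound G (hGmeas.comp hαmeas) 1 hGbound
    symm
    refine (ae_eq_condExp_of_forall_setIntegral_eq hmle hfint
      (fun s _ _ => hGint.integrableOn) ?_ ?_).symm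
    · -- set integral equality
      rintro s ⟨S, hS, rfl⟩ -
      set φ : C(ℝ, ℝ) × C(K, ℝ) → ℝ := fun p =>
        Set.indicator S (fun _ => (1:ℝ)) p.2 * Set.indicator V (fun _ => (1:ℝ)) (F p) with hφ
      have hφmeas : Measurable φ :=
        ((measurable_const.indicator hS).comp measurable_snd).mul
          ((measurable_const.indicator hV).comp contF.measurable)
      have hφbound : ∀ p, |φ p| ≤ 1 := by
        intro p
        rw [hφ, abs_mul]
        refine mul_le_one₀ ?_ (abs_nonneg _) ?_ <;>
          · rw [Set.indicator_apply]; split <;> simp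
      have hφint : Integrable φ (μB.prod μα) :=
        integrable_of_bound φ hφmeas 1 hφbound
      -- LHS : ∫ f over α ⁻¹' S
      have lhs : ∫ ω in α ⁻¹' S, G ω ∂P
          = ∫ g, Set.indicator S (fun _ => (1:ℝ)) g * (m g V).toReal ∂μα := by
        rw [← integral_indicator (hαmeas hS)]
        rw [hμα, integral_map hαmeas.aemeasurable
          (f := fun g => Set.indicator S (fun _ => (1:ℝ)) g * (m g V).toReal)
          (((measurable_const.indicator hS).mul hGmeas).aestronglyMeasurable)]
        refine integral_congr_ae (Filter.Eventually.of_forall fun ω => ?_)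
        by_cases hω : α ω ∈ S <;> simp [Set.indicator_apply, hω, hG]
      have rhs : ∫ ω in α ⁻¹' S, f ω ∂P = ∫ p, φ p ∂(μB.prod μα) := by
        rw [← joint, integral_map (hBmeas.prodMk hαmeas).aemeasurable
          hφmeas.aestronglyMeasurable, ← integral_indicator (hαmeas hS)]
        refine integral_congr_ae (Filter.Eventually.of_forall fun ω => ?_)
        by_cases hω : α ω ∈ S <;> simp [Set.indicator_apply, hω, hφ, hf, hF]
      have fub : ∫ p, φ p ∂(μB.prod μα)
          = ∫ g, Set.indicator S (fun _ => (1:ℝ)) g * (m g V).toReal ∂μα := by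
        rw [integral_prod_symm φ hφint]
        refine integral_congr_ae (Filter.Eventually.of_forall fun g => ?_)
        rw [hφ]
        dsimp only
        rw [integral_const_mul]
        congr 1
        have : ∀ x : C(ℝ, ℝ), Set.indicator V (fun _ => (1:ℝ)) (F (x, g))
            = Set.indicator ((fun x => (x, g)) ⁻¹' (F ⁻¹' V)) (1 : C(ℝ, ℝ) → ℝ) x := by
          intro x
          by_cases hx : F (x, g) ∈ V <;> simp [Set.indicator_apply, hx]
        simp_rw [this]
        rw [integral_indicator_one (measurable_prodMk_right (hsV))]
        rw [hmV g]
        rfl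
      rw [lhs, rhs, fub]
    · -- strong measurability wrt comap
      have : Measurable[MeasurableSpace.comap α inferInstance] G := by
        rw [hG]
        have hα' : Measurable[MeasurableSpace.comap α inferInstance] α :=
          Measurable.of_comap_le le_rfl
        exact hGmeas.comp hα'
      exact this.stronglyMeasurable.aestronglyMeasurable
end
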